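/- arXiv:2501.01502 — 9 statements merged into one kernel-verified Lean document; each statement's English description precedes it below -/
import Mathlib

section
/- Let g₁ and g₂ be monic polynomials in F[x] such that the product g₁·g₂ divides x^{2n} − 1. If e₁ ∈ R is an idempotent generating the ideal of R generated by the image of (x^{2n} − 1)/g₁, and e₂ ∈ R is an idempotent generating the ideal generated by the image of (x^{2n} − 1)/g₂, then e₁ + e₂ is an idempotent of R and it generates the ideal of R generated by the image of (x^{2n} − 1)/(g₁·g₂). -/
open Polynomial

/-- `Rq F N` is the quotient ring `F[x]/(x^N - 1)`. -/
abbrev Rq (F : Type*) [Field F] (N : ℕ) : Type _ :=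
  F[X] ⧸ Ideal.span ({X ^ N - 1} : Set F[X])

/-- The canonical projection `F[x] → F[x]/(x^N - 1)`. -/
noncomputable abbrev mkq (F : Type*) [Field F] (N : ℕ) : F[X] →+* Rq F N :=
  Ideal.Quotient.mk (Ideal.span ({X ^ N - 1} : Set F[X]))

private theorem aux_0 {F : Type*} [Field F] {N : ℕ}
    (hchar : ((N : ℕ) : F) ≠ 0)
    (g₁ g₂ : F[X]) (hg₁ : g₁.Monic) (hg₂ : g₂.Monic)
    (hdvd : g₁ * g₂ ∣ X ^ N - 1)
    (e₁ e₂ : Rq F N)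
    (he₁ : e₁ * e₁ = e₁) (he₂ : e₂ * e₂ = e₂)
    (hgen₁ : Ideal.span {e₁} = Ideal.span {mkq F N ((X ^ N - 1) /ₘ g₁)})
    (hgen₂ : Ideal.span {e₂} = Ideal.span {mkq F N ((X ^ N - 1) /ₘ g₂)}) :
    (e₁ + e₂) * (e₁ + e₂) = e₁ + e₂ ∧
    Ideal.span {e₁ + e₂} = Ideal.span {mkq F N ((X ^ N - 1) /ₘ (g₁ * g₂))} := by
  have hg₁₂m : (g₁ * g₂).Monic := hg₁.mul hg₂
  have hg₁d : g₁ ∣ X ^ N - 1 := (dvd_mul_right g₁ g₂).trans hdvd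
  have hg₂d : g₂ ∣ X ^ N - 1 := (dvd_mul_left g₂ g₁).trans hdvd
  have hdiv : ∀ g : F[X], g.Monic → g ∣ X ^ N - 1 →
      g * ((X ^ N - 1) /ₘ g) = X ^ N - 1 := by
    intro g hm hd
    have := Polynomial.modByMonic_add_div (X ^ N - 1 : F[X]) (q := g)
    rwa [(Polynomial.modByMonic_eq_zero_iff_dvd hm).2 hd, zero_add] at this
  have h1 : g₁ * ((X ^ N - 1) /ₘ g₁) = X ^ N - 1 := hdiv g₁ hg₁ hg₁d
  have h2 : g₂ * ((X ^ N - 1) /ₘ g₂) = X ^ N - 1 := hdiv g₂ hg₂ hg₂d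
  have h12 : (g₁ * g₂) * ((X ^ N - 1) /ₘ (g₁ * g₂)) = X ^ N - 1 :=
    hdiv (g₁ * g₂) hg₁₂m hdvd
  have hg₁ne : g₁ ≠ 0 := hg₁.ne_zero
  have hg₂ne : g₂ ≠ 0 := hg₂.ne_zero
  have hq1 : (X ^ N - 1 : F[X]) /ₘ g₁ = ((X ^ N - 1) /ₘ (g₁ * g₂)) * g₂ := by
    apply mul_left_cancel₀ hg₁ne
    rw [h1]
    rw [show g₁ * (((X ^ N - 1 : F[X]) /ₘ (g₁ * g₂)) * g₂)
        = (g₁ * g₂) * ((X ^ N - 1) /ₘ (g₁ * g₂)) from by ring, h12]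
  have hq2 : (X ^ N - 1 : F[X]) /ₘ g₂ = ((X ^ N - 1) /ₘ (g₁ * g₂)) * g₁ := by
    apply mul_left_cancel₀ hg₂ne
    rw [h2]
    rw [show g₂ * (((X ^ N - 1 : F[X]) /ₘ (g₁ * g₂)) * g₁)
        = (g₁ * g₂) * ((X ^ N - 1) /ₘ (g₁ * g₂)) from by ring, h12]
  have hsep : (X ^ N - 1 : F[X]).Separable := by
    simpa using Polynomial.separable_X_pow_sub_C (1 : F) hchar one_ne_zero
  obtain ⟨u, v, huv⟩ : IsCoprime g₁ g₂ := Polynomial.Separable.isCoprime (hsep.of_dvd hdvd)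
  have hπP : mkq F N (X ^ N - 1) = 0 :=
    Ideal.Quotient.eq_zero_iff_mem.2 (Ideal.subset_span rfl)
  have hd₁ : mkq F N ((X ^ N - 1) /ₘ g₁) ∣ e₁ :=
    Ideal.span_singleton_le_span_singleton.1 (le_of_eq hgen₁)
  have hd₁' : e₁ ∣ mkq F N ((X ^ N - 1) /ₘ g₁) :=
    Ideal.span_singleton_le_span_singleton.1 (le_of_eq hgen₁.symm)
  have hd₂ : mkq F N ((X ^ N - 1) /ₘ g₂) ∣ e₂ :=
    Ideal.span_singleton_le_span_singleton.1 (le_of_eq hgen₂)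
  have hd₂' : e₂ ∣ mkq F N ((X ^ N - 1) /ₘ g₂) :=
    Ideal.span_singleton_le_span_singleton.1 (le_of_eq hgen₂.symm)
  obtain ⟨a, ha⟩ := hd₁
  obtain ⟨b, hb⟩ := hd₂
  have hzero : e₁ * e₂ = 0 := by
    have hprod : mkq F N ((X ^ N - 1) /ₘ g₁) * mkq F N ((X ^ N - 1) /ₘ g₂) = 0 := by
      rw [← map_mul, hq1, hq2]
      rw [show (((X ^ N - 1 : F[X]) /ₘ (g₁ * g₂)) * g₂) * (((X ^ N - 1) /ₘ (g₁ * g₂)) * g₁)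
          = ((g₁ * g₂) * ((X ^ N - 1) /ₘ (g₁ * g₂))) * ((X ^ N - 1) /ₘ (g₁ * g₂)) from by ring,
        h12, map_mul, hπP, zero_mul]
    calc e₁ * e₂ = (mkq F N ((X ^ N - 1) /ₘ g₁) * mkq F N ((X ^ N - 1) /ₘ g₂)) * (a * b) := by
          rw [ha, hb]; ring
    _ = 0 := by rw [hprod, zero_mul]
  refine ⟨?_, ?_⟩
  · rw [add_mul, mul_add, mul_add, he₁, he₂, hzero, mul_comm e₂ e₁, hzero]
    ring
  · apply le_antisymm
    · rw [Ideal.span_singleton_le_span_singleton]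
      have hd₁'' : mkq F N ((X ^ N - 1) /ₘ g₁) ∣ e₁ := ⟨a, ha⟩
      have d1 : mkq F N ((X ^ N - 1) /ₘ (g₁ * g₂)) ∣ e₁ := by
        refine dvd_trans ?_ hd₁''
        rw [hq1, map_mul]; exact Dvd.intro _ rfl
      have d2 : mkq F N ((X ^ N - 1) /ₘ (g₁ * g₂)) ∣ e₂ := by
        refine dvd_trans ?_ ⟨b, hb⟩
        rw [hq2, map_mul]; exact Dvd.intro _ rfl
      exact dvd_add d1 d2
    · rw [Ideal.span_singleton_le_span_singleton]
      have de1 : (e₁ + e₂) ∣ e₁ :=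
        ⟨e₁, by rw [add_mul, he₁, mul_comm e₂ e₁, hzero, add_zero]⟩
      have de2 : (e₁ + e₂) ∣ e₂ := ⟨e₂, by rw [add_mul, he₂, hzero, zero_add]⟩
      have key : (X ^ N - 1 : F[X]) /ₘ (g₁ * g₂)
          = v * ((X ^ N - 1) /ₘ g₁) + u * ((X ^ N - 1) /ₘ g₂) := by
        rw [hq1, hq2]
        calc (X ^ N - 1 : F[X]) /ₘ (g₁ * g₂)
            = ((X ^ N - 1) /ₘ (g₁ * g₂)) * (u * g₁ + v * g₂) := by rw [huv, mul_one]
        _ = v * (((X ^ N - 1) /ₘ (g₁ * g₂)) * g₂) + u * (((X ^ N - 1) /ₘ (g₁ * g₂)) * g₁) := by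
            ring
      rw [key, map_add, map_mul, map_mul]
      exact dvd_add (Dvd.dvd.mul_left (de1.trans hd₁') _)
        (Dvd.dvd.mul_left (de2.trans hd₂') _)

theorem stmt_0 {F : Type*} [Field F] {n : ℕ} (hn : 1 ≤ n)
    (hchar : ((2 * n : ℕ) : F) ≠ 0)
    (g₁ g₂ : F[X]) (hg₁ : g₁.Monic) (hg₂ : g₂.Monic)
    (hdvd : g₁ * g₂ ∣ X ^ (2 * n) - 1)
    (e₁ e₂ : Rq F (2 * n))
    (he₁ : e₁ * e₁ = e₁) (he₂ : e₂ * e₂ = e₂)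
    (hgen₁ : Ideal.span {e₁} = Ideal.span {mkq F (2 * n) ((X ^ (2 * n) - 1) /ₘ g₁)})
    (hgen₂ : Ideal.span {e₂} = Ideal.span {mkq F (2 * n) ((X ^ (2 * n) - 1) /ₘ g₂)}) :
    (e₁ + e₂) * (e₁ + e₂) = e₁ + e₂ ∧
    Ideal.span {e₁ + e₂} = Ideal.span {mkq F (2 * n) ((X ^ (2 * n) - 1) /ₘ (g₁ * g₂))} := by
  exact aux_0 hchar g₁ g₂ hg₁ hg₂ hdvd e₁ e₂ he₁ he₂ hgen₁ hgen₂
end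

section
/- Let h be a monic divisor of x^M − 1 in F[x], and let φ : F[x]/(x^M − 1) → F[x]/(x^{2n} − 1) be the F-algebra homomorphism induced by x ↦ x^ℓ. Then the polynomial h(x^ℓ) divides x^{2n} − 1, and if ê ∈ F[x]/(x^M − 1) is an idempotent generating the ideal generated by the image of (x^M − 1)/h, then φ(ê) is an idempotent of F[x]/(x^{2n} − 1) generating the ideal generated by the image of (x^{2n} − 1)/h(x^ℓ). -/
open Polynomial

theorem stmt_5 {F : Type*} [Field F] {n ℓ M : ℕ} (hn : 1 ≤ n)
    (hchar : ((2 * n : ℕ) : F) ≠ 0)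
    (hℓpos : 0 < ℓ) (hℓdvd : ℓ ∣ 2 * n) (hM : M = 2 * n / ℓ)
    (h : F[X]) (hmonic : h.Monic) (hdvd : h ∣ X ^ M - 1)
    (φ : Rq F M →ₐ[F] Rq F (2 * n))
    (hφ : φ (mkq F M X) = mkq F (2 * n) (X ^ ℓ)) :
    h.comp (X ^ ℓ) ∣ X ^ (2 * n) - 1 ∧
    ∀ ehat : Rq F M, ehat * ehat = ehat →
      Ideal.span {ehat} = Ideal.span {mkq F M ((X ^ M - 1) /ₘ h)} →
      φ ehat * φ ehat = φ ehat ∧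
      Ideal.span {φ ehat} =
        Ideal.span {mkq F (2 * n) ((X ^ (2 * n) - 1) /ₘ h.comp (X ^ ℓ))} := by
  obtain ⟨g, hg⟩ := hdvd
  have hMl : M * ℓ = 2 * n := by
    rw [hM]; exact Nat.div_mul_cancel hℓdvd
  have hcomp : (X ^ M - 1 : F[X]).comp (X ^ ℓ) = X ^ (2 * n) - 1 := by
    simp [sub_comp, X_pow_comp, ← pow_mul, mul_comm ℓ M, hMl]
  have hkey : h.comp (X ^ ℓ) * g.comp (X ^ ℓ) = X ^ (2 * n) - 1 := by
    rw [← mul_comp, ← hg, hcomp]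
  have hmonic' : (h.comp (X ^ ℓ)).Monic :=
    hmonic.comp (monic_X_pow ℓ) (by simp [hℓpos.ne'])
  have hdvd' : h.comp (X ^ ℓ) ∣ X ^ (2 * n) - 1 := ⟨g.comp (X ^ ℓ), hkey.symm⟩
  refine ⟨hdvd', fun ehat hid hspan => ⟨by rw [← map_mul, hid], ?_⟩⟩
  -- identify the quotients of the monic divisions
  have hgq : (X ^ M - 1 : F[X]) /ₘ h = g := by
    rw [hg, mul_divByMonic_cancel_left _ hmonic]
  have hgq' : (X ^ (2 * n) - 1 : F[X]) /ₘ h.comp (X ^ ℓ) = g.comp (X ^ ℓ) := by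
    rw [← hkey, mul_divByMonic_cancel_left _ hmonic']
  -- φ of mkq p is mkq (p.comp (X^ℓ))
  have hφall : ∀ p : F[X], φ (mkq F M p) = mkq F (2 * n) (p.comp (X ^ ℓ)) := by
    intro p
    have : φ.comp (Ideal.Quotient.mkₐ F (Ideal.span ({X ^ M - 1} : Set F[X])))
        = (Ideal.Quotient.mkₐ F (Ideal.span ({X ^ (2 * n) - 1} : Set F[X]))).comp
          (aeval (X ^ ℓ : F[X])) := by
      apply Polynomial.algHom_ext
      simpa using hφ
    have := congrArg (fun ψ => ψ p) this
    simpa [comp, aeval_def] using this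
  rw [hgq] at hspan
  rw [hgq', ← hφall g]
  have h1 : mkq F M g ∣ ehat := Ideal.span_singleton_le_span_singleton.mp hspan.le
  have h2 : ehat ∣ mkq F M g := Ideal.span_singleton_le_span_singleton.mp hspan.ge
  exact le_antisymm
    (Ideal.span_singleton_le_span_singleton.mpr (map_dvd φ h1))
    (Ideal.span_singleton_le_span_singleton.mpr (map_dvd φ h2))
end

section
/- Let h be a monic irreducible divisor of x^M − 1 in F[x], let φ : F[x]/(x^M − 1) → F[x]/(x^{2n} − 1) be the F-algebra homomorphism induced by x ↦ x^ℓ, and let ê ∈ F[x]/(x^M − 1) be an idempotent generating the ideal generated by the image of (x^M − 1)/h. Suppose that for each monic irreducible polynomial p dividing x^{2n} − 1 an idempotent e_p ∈ F[x]/(x^{2n} − 1) generating the ideal generated by the image of (x^{2n} − 1)/p is given. Then φ(ê) = ∑_p e_p, where the sum ranges over all monic irreducible divisors p of x^{2n} − 1 that divide h(x^ℓ). -/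
open Polynomial

/-- Two idempotents generating the same ideal are equal. -/
lemma idem_eq_of_span_eq {R : Type*} [CommRing R] {a b : R}
    (ha : a * a = a) (hb : b * b = b)
    (hsp : Ideal.span {a} = Ideal.span {b}) : a = b := by
  have h1 : b ∣ a := Ideal.span_singleton_le_span_singleton.mp hsp.le
  have h2 : a ∣ b := Ideal.span_singleton_le_span_singleton.mp hsp.ge
  obtain ⟨c, hc⟩ := h1
  obtain ⟨d, hd⟩ := h2
  have hab : a * b = a := by
    calc a * b = b * b * c := by rw [hc]; ring
    _ = b * c := by rw [hb]
    _ = a := hc.symm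
  have hba : b * a = b := by
    calc b * a = a * a * d := by rw [hd]; ring
    _ = a * d := by rw [ha]
    _ = b := hd.symm
  calc a = a * b := hab.symm
  _ = b * a := mul_comm _ _
  _ = b := hba

set_option maxHeartbeats 2000000 in
open scoped Classical in
theorem stmt_6 {F : Type*} [Field F] {n ℓ M : ℕ} (hn : 1 ≤ n)
    (hchar : ((2 * n : ℕ) : F) ≠ 0)
    (hℓpos : 0 < ℓ) (hℓdvd : ℓ ∣ 2 * n) (hM : M = 2 * n / ℓ)
    (h : F[X]) (hmonic : h.Monic) (hirr : Irreducible h) (hdvd : h ∣ X ^ M - 1)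
    (φ : Rq F M →ₐ[F] Rq F (2 * n))
    (hφ : φ (mkq F M X) = mkq F (2 * n) (X ^ ℓ))
    (ehat : Rq F M) (hehat : ehat * ehat = ehat)
    (hgen : Ideal.span {ehat} = Ideal.span {mkq F M ((X ^ M - 1) /ₘ h)})
    (P : Finset F[X])
    (hP : ∀ p : F[X], p ∈ P ↔ p.Monic ∧ Irreducible p ∧ p ∣ X ^ (2 * n) - 1)
    (e : F[X] → Rq F (2 * n))
    (he : ∀ p ∈ P, e p * e p = e p ∧
      Ideal.span {e p} = Ideal.span {mkq F (2 * n) ((X ^ (2 * n) - 1) /ₘ p)}) :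
    φ ehat = ∑ p ∈ P.filter (fun p => p ∣ h.comp (X ^ ℓ)), e p := by
  have hN0 : 2 * n ≠ 0 := by omega
  have hMℓ : ℓ * M = 2 * n := by rw [hM]; exact Nat.mul_div_cancel' hℓdvd
  have hM0 : M ≠ 0 := by rintro rfl; omega
  set m : F[X] := X ^ (2 * n) - 1 with hm_def
  have hmmonic : m.Monic := by simpa using monic_X_pow_sub_C (1 : F) hN0
  have hm0 : m ≠ 0 := hmmonic.ne_zero
  have hmk0 : mkq F (2 * n) m = 0 := by
    rw [Ideal.Quotient.eq_zero_iff_mem]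
    exact Ideal.subset_span rfl
  have hmsq : Squarefree m := by
    simpa using (separable_X_pow_sub_C (1 : F) hchar one_ne_zero).squarefree
  set H : F[X] := h.comp (X ^ ℓ) with hH_def
  have hcomp : (X ^ M - 1 : F[X]).comp (X ^ ℓ) = m := by
    simp [sub_comp, pow_comp, X_comp, one_comp, ← pow_mul, hMℓ]
    exact hm_def.symm
  obtain ⟨t, ht⟩ := hdvd
  have hq : (X ^ M - 1) /ₘ h = t := by
    rw [ht, mul_divByMonic_cancel_left _ hmonic]
  set Q : F[X] := t.comp (X ^ ℓ) with hQ_def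
  have hmHQ : m = H * Q := by rw [← hcomp, ht, mul_comp]
  have hHmonic : H.Monic :=
    hmonic.comp (monic_X_pow ℓ) (by simpa using hℓpos.ne')
  have hH0 : H ≠ 0 := hHmonic.ne_zero
  have hHm : H ∣ m := ⟨Q, hmHQ⟩
  have hHsq : Squarefree H := hmsq.squarefree_of_dvd hHm
  have hmdivH : m /ₘ H = Q := by rw [hmHQ, mul_divByMonic_cancel_left _ hHmonic]
  -- φ is composition with X^ℓ
  have hφ' : ∀ f : F[X], φ (mkq F M f) = mkq F (2 * n) (f.comp (X ^ ℓ)) := by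
    intro f
    have hext : φ.comp (Ideal.Quotient.mkₐ F (Ideal.span ({X ^ M - 1} : Set F[X])))
        = (Ideal.Quotient.mkₐ F (Ideal.span ({X ^ (2 * n) - 1} : Set F[X]))).comp
          (aeval (X ^ ℓ : F[X])) := by
      apply Polynomial.algHom_ext
      simpa [Ideal.Quotient.mkₐ_eq_mk] using hφ
    have := AlgHom.congr_fun hext f
    simpa [Ideal.Quotient.mkₐ_eq_mk, ← comp_eq_aeval] using this
  -- φ ehat is idempotent with span equal to span (mkq Q)
  have hφidem : φ ehat * φ ehat = φ ehat := by rw [← map_mul, hehat]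
  have hφQ : φ (mkq F M ((X ^ M - 1) /ₘ h)) = mkq F (2 * n) Q := by
    rw [hq, hφ']
  have hspanφ : Ideal.span {φ ehat} = Ideal.span {mkq F (2 * n) Q} := by
    apply le_antisymm <;> rw [Ideal.span_singleton_le_span_singleton]
    · have h1 : mkq F M ((X ^ M - 1) /ₘ h) ∣ ehat :=
        Ideal.span_singleton_le_span_singleton.mp hgen.le
      have := map_dvd φ h1
      rwa [hφQ] at this
    · have h2 : ehat ∣ mkq F M ((X ^ M - 1) /ₘ h) :=
        Ideal.span_singleton_le_span_singleton.mp hgen.ge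
      have := map_dvd φ h2
      rwa [hφQ] at this
  -- basic facts about members of P
  have pmem : ∀ p ∈ P, p.Monic ∧ Irreducible p ∧ p ∣ m := fun p hp => (hP p).mp hp
  have hprime : ∀ p ∈ P, Prime p := fun p hp =>
    (UniqueFactorizationMonoid.irreducible_iff_prime).mp (pmem p hp).2.1
  have hpeq : ∀ p ∈ P, ∀ q ∈ P, p ∣ q → p = q := fun p hp q hq hd =>
    eq_of_monic_of_associated (pmem p hp).1 (pmem q hq).1
      ((pmem p hp).2.1.associated_of_dvd (pmem q hq).2.1 hd)
  have hfacp : ∀ p ∈ P, m = p * (m /ₘ p) := by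
    intro p hp
    obtain ⟨c, hc⟩ := (pmem p hp).2.2
    rw [hc, mul_divByMonic_cancel_left _ (pmem p hp).1]
  have hEdvd : ∀ p ∈ P, mkq F (2 * n) (m /ₘ p) ∣ e p := fun p hp =>
    Ideal.span_singleton_le_span_singleton.mp (he p hp).2.le
  have hEdvd' : ∀ p ∈ P, e p ∣ mkq F (2 * n) (m /ₘ p) := fun p hp =>
    Ideal.span_singleton_le_span_singleton.mp (he p hp).2.ge
  have Z : ∀ p ∈ P, ∀ f : F[X], m ∣ f * (m /ₘ p) → mkq F (2 * n) f * e p = 0 := by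
    intro p hp f hfd
    obtain ⟨a, ha⟩ := hEdvd p hp
    obtain ⟨c, hc⟩ := hfd
    calc mkq F (2 * n) f * e p = mkq F (2 * n) (f * (m /ₘ p)) * a := by
          rw [ha, map_mul]; ring
      _ = mkq F (2 * n) m * mkq F (2 * n) c * a := by rw [hc, map_mul]
      _ = 0 := by rw [hmk0, zero_mul, zero_mul]
  have habs : ∀ p ∈ P, mkq F (2 * n) (m /ₘ p) * e p = mkq F (2 * n) (m /ₘ p) := by
    intro p hp
    obtain ⟨c, hc⟩ := hEdvd' p hp
    calc mkq F (2 * n) (m /ₘ p) * e p = (e p * e p) * c := by rw [hc]; ring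
      _ = e p * c := by rw [(he p hp).1]
      _ = mkq F (2 * n) (m /ₘ p) := hc.symm
  have ortho : ∀ p ∈ P, ∀ q ∈ P, p ≠ q → mkq F (2 * n) (m /ₘ p) * e q = 0 := by
    intro p hp q hq hne
    apply Z q hq
    have hqdp : q ∣ m /ₘ p := by
      have hqm : q ∣ p * (m /ₘ p) := (hfacp p hp) ▸ (pmem q hq).2.2
      rcases (hprime q hq).dvd_mul.mp hqm with hq1 | hq2
      · exact absurd (hpeq q hq p hp hq1) (fun hEq => hne hEq.symm)
      · exact hq2
    obtain ⟨c, hc⟩ := hqdp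
    refine ⟨c, ?_⟩
    calc (m /ₘ p) * (m /ₘ q) = (q * (m /ₘ q)) * c := by rw [hc]; ring
      _ = m * c := by rw [← hfacp q hq]
  have eortho : ∀ p ∈ P, ∀ q ∈ P, p ≠ q → e p * e q = 0 := by
    intro p hp q hq hne
    obtain ⟨a, ha⟩ := hEdvd p hp
    calc e p * e q = mkq F (2 * n) (m /ₘ p) * e q * a := by rw [ha]; ring
      _ = 0 := by rw [ortho p hp q hq hne, zero_mul]
  -- the filtered set
  set S : Finset F[X] := P.filter (fun p => p ∣ H) with hS_def
  have hSP : ∀ p ∈ S, p ∈ P := fun p hp => (Finset.mem_filter.mp hp).1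
  have hSH : ∀ p ∈ S, p ∣ H := fun p hp => (Finset.mem_filter.mp hp).2
  -- H is the product of the elements of S
  have hSprod : ∏ p ∈ S, p = H := by
    have hnd : (UniqueFactorizationMonoid.normalizedFactors H).Nodup :=
      (UniqueFactorizationMonoid.squarefree_iff_nodup_normalizedFactors hH0).mp hHsq
    have hSet : S = (UniqueFactorizationMonoid.normalizedFactors H).toFinset := by
      ext p
      simp only [hS_def, Finset.mem_filter, Multiset.mem_toFinset, hP]
      constructor
      · rintro ⟨⟨pm, pi, _⟩, pH⟩
        obtain ⟨q, hqmem, hassoc⟩ :=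
          UniqueFactorizationMonoid.exists_mem_normalizedFactors_of_dvd hH0 pi pH
        have hqn : normalize q = q :=
          UniqueFactorizationMonoid.normalize_normalized_factor q hqmem
        have hpq : p = q := by
          have hnn : normalize p = normalize q :=
            normalize_eq_normalize hassoc.dvd hassoc.symm.dvd
          rw [pm.normalize_eq_self] at hnn
          rw [hnn, hqn]
        rwa [hpq]
      · intro hq
        have pirr := UniqueFactorizationMonoid.irreducible_of_normalized_factor p hq
        have pdH := UniqueFactorizationMonoid.dvd_of_mem_normalizedFactors hq
        have pm : p.Monic := by
          rw [← UniqueFactorizationMonoid.normalize_normalized_factor p hq]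
          exact monic_normalize pirr.ne_zero
        exact ⟨⟨pm, pirr, pdH.trans hHm⟩, pdH⟩
    rw [hSet]
    have hfin : ∏ p ∈ (UniqueFactorizationMonoid.normalizedFactors H).toFinset, p
        = (UniqueFactorizationMonoid.normalizedFactors H).prod := by
      rw [Finset.prod_eq_multiset_prod, Multiset.toFinset_val,
        Multiset.dedup_eq_self.mpr hnd, Multiset.map_id']
    rw [hfin]
    refine eq_of_monic_of_associated ?_ hHmonic
      (UniqueFactorizationMonoid.prod_normalizedFactors hH0)
    have hmono : ∀ u : Multiset F[X], (∀ q ∈ u, q.Monic) → u.prod.Monic := by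
      intro u
      induction u using Multiset.induction_on with
      | empty => intro _; simp [monic_one]
      | cons a u ihu =>
        intro hu
        rw [Multiset.prod_cons]
        exact (hu a (Multiset.mem_cons_self a u)).mul
          (ihu fun q hq => hu q (Multiset.mem_cons_of_mem hq))
    refine hmono _ fun q hq => ?_
    rw [← UniqueFactorizationMonoid.normalize_normalized_factor q hq]
    exact monic_normalize
      (UniqueFactorizationMonoid.irreducible_of_normalized_factor q hq).ne_zero
  have hTdvd : ∀ T : Finset F[X], T ⊆ S → (∏ p ∈ T, p) ∣ H := by
    intro T hT
    rw [← hSprod]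
    exact Finset.prod_dvd_prod_of_subset T S id hT
  have hTmonic : ∀ T : Finset F[X], T ⊆ S → (∏ p ∈ T, p).Monic := by
    intro T hT
    exact monic_prod_of_monic _ _ fun p hp => (pmem p (hSP p (hT hp))).1
  -- the key induction
  have key : ∀ T : Finset F[X], T ⊆ S →
      mkq F (2 * n) (m /ₘ ∏ p ∈ T, p) * (∑ p ∈ T, e p)
        = mkq F (2 * n) (m /ₘ ∏ p ∈ T, p) := by
    intro T
    induction T using Finset.induction_on with
    | empty => intro _; simp [divByMonic_one, hmk0]
    | @insert p T' hpT' ih =>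
      intro hsub
      have hpS : p ∈ S := hsub (Finset.mem_insert_self p T')
      have hT'S : T' ⊆ S := fun q hq => hsub (Finset.mem_insert_of_mem hq)
      have hpP : p ∈ P := hSP p hpS
      specialize ih hT'S
      rw [Finset.prod_insert hpT', Finset.sum_insert hpT']
      set G' : F[X] := ∏ q ∈ T', q with hG'_def
      have hG'mon : G'.Monic := hTmonic T' hT'S
      have hGdvdH : p * G' ∣ H := by
        have := hTdvd (insert p T') hsub
        rwa [Finset.prod_insert hpT'] at this
      have hGm : p * G' ∣ m := hGdvdH.trans hHm
      have hG'm : G' ∣ m := (dvd_mul_left G' p).trans hGm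
      have hfacG : m = (p * G') * (m /ₘ (p * G')) := by
        obtain ⟨c, hc⟩ := hGm
        rw [hc, mul_divByMonic_cancel_left _ ((pmem p hpP).1.mul hG'mon)]
      have h1 : m /ₘ G' = p * (m /ₘ (p * G')) := by
        have e1 : m = G' * (p * (m /ₘ (p * G'))) := by rw [← mul_assoc, mul_comm G' p]; exact hfacG
        conv_lhs => rw [e1]
        rw [mul_divByMonic_cancel_left _ hG'mon]
      have h2 : m /ₘ p = G' * (m /ₘ (p * G')) := by
        have e2 : m = p * (G' * (m /ₘ (p * G'))) := by rw [← mul_assoc]; exact hfacG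
        conv_lhs => rw [e2]
        rw [mul_divByMonic_cancel_left _ (pmem p hpP).1]
      have hpndvd : ¬ p ∣ G' := by
        intro hd
        obtain ⟨q, hqT', hpq⟩ := ((hprime p hpP).dvd_finset_prod_iff id).mp hd
        have : p = q := hpeq p hpP q (hSP q (hT'S hqT')) hpq
        exact hpT' (this ▸ hqT')
      have hcop : IsCoprime p G' := ((pmem p hpP).2.1.coprime_iff_not_dvd).mpr hpndvd
      obtain ⟨a, b, hab⟩ := hcop
      have hdecomp : m /ₘ (p * G') = a * (m /ₘ G') + b * (m /ₘ p) := by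
        calc m /ₘ (p * G') = (a * p + b * G') * (m /ₘ (p * G')) := by rw [hab, one_mul]
          _ = a * (p * (m /ₘ (p * G'))) + b * (G' * (m /ₘ (p * G'))) := by ring
          _ = a * (m /ₘ G') + b * (m /ₘ p) := by rw [← h1, ← h2]
      have hG'ep : mkq F (2 * n) (m /ₘ G') * e p = 0 := by
        refine Z p hpP _ ⟨m /ₘ (p * G'), ?_⟩
        calc (m /ₘ G') * (m /ₘ p) = (p * (m /ₘ p)) * (m /ₘ (p * G')) := by rw [h1]; ring
          _ = m * (m /ₘ (p * G')) := by rw [← hfacp p hpP]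
      have hps' : mkq F (2 * n) (m /ₘ p) * (∑ q ∈ T', e q) = 0 := by
        rw [Finset.mul_sum]
        apply Finset.sum_eq_zero
        intro q hq
        exact ortho p hpP q (hSP q (hT'S hq)) (fun hEq => hpT' (hEq ▸ hq))
      calc mkq F (2 * n) (m /ₘ (p * G')) * (e p + ∑ q ∈ T', e q)
          = mkq F (2 * n) a * (mkq F (2 * n) (m /ₘ G') * e p
              + mkq F (2 * n) (m /ₘ G') * (∑ q ∈ T', e q))
            + mkq F (2 * n) b * (mkq F (2 * n) (m /ₘ p) * e p
              + mkq F (2 * n) (m /ₘ p) * (∑ q ∈ T', e q)) := by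
            rw [hdecomp, map_add, map_mul, map_mul]; ring
        _ = mkq F (2 * n) a * mkq F (2 * n) (m /ₘ G')
            + mkq F (2 * n) b * mkq F (2 * n) (m /ₘ p) := by
            rw [hG'ep, ih, habs p hpP, hps', zero_add, add_zero]
        _ = mkq F (2 * n) (m /ₘ (p * G')) := by
            rw [← map_mul, ← map_mul, ← map_add, ← hdecomp]
  set s : Rq F (2 * n) := ∑ p ∈ S, e p with hs_def
  have hQs : mkq F (2 * n) Q * s = mkq F (2 * n) Q := by
    have := key S (le_refl S)
    rwa [hSprod, hmdivH] at this
  have hsQ : mkq F (2 * n) Q ∣ s := by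
    apply Finset.dvd_sum
    intro p hp
    have hQdvd : Q ∣ m /ₘ p := by
      obtain ⟨u, hu⟩ := hSH p hp
      refine ⟨u, ?_⟩
      have e3 : m = p * (u * Q) := by rw [hmHQ, hu]; ring
      conv_lhs => rw [e3]
      rw [mul_divByMonic_cancel_left _ (pmem p (hSP p hp)).1, mul_comm]
    exact (map_dvd (mkq F (2 * n)) hQdvd).trans (hEdvd p (hSP p hp))
  have hss : s * s = s := by
    rw [hs_def, Finset.sum_mul]
    apply Finset.sum_congr rfl
    intro p hp
    rw [Finset.mul_sum]
    rw [Finset.sum_eq_single p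
      (fun q hq hne => eortho p (hSP p hp) q (hSP q hq) hne.symm)
      (fun hnp => absurd hp hnp)]
    exact (he p (hSP p hp)).1
  have hspanS : Ideal.span {s} = Ideal.span {mkq F (2 * n) Q} := by
    apply le_antisymm <;> rw [Ideal.span_singleton_le_span_singleton]
    · exact hsQ
    · exact ⟨mkq F (2 * n) Q, hQs.symm.trans (mul_comm _ _)⟩
  exact idem_eq_of_span_eq hφidem hss (hspanφ.trans hspanS.symm)
end

section
/- Let h be a self-reciprocal monic irreducible divisor of x^M − 1 in F[x], and let p be a monic irreducible divisor of x^{2n} − 1. If p divides h(x^ℓ), then the reciprocal polynomial p* also divides h(x^ℓ). -/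
open Polynomial

/-- The reciprocal polynomial `p*(x) = p(0)⁻¹ · x^(deg p) · p(1/x)` of `p`. -/
noncomputable def recip {F : Type*} [Field F] (p : F[X]) : F[X] :=
  C (p.coeff 0)⁻¹ * p.reverse

lemma reflect_expand {F : Type*} [Field F] (f : F[X]) (ℓ d : ℕ) (hℓ : 0 < ℓ) :
    reflect (d * ℓ) (expand F ℓ f) = expand F ℓ (reflect d f) := by
  ext n
  rw [coeff_reflect, coeff_expand hℓ, coeff_expand hℓ]
  rcases le_or_gt n (d * ℓ) with hle | hlt
  · rw [revAt_le hle]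
    by_cases hdvd : ℓ ∣ n
    · obtain ⟨k, rfl⟩ := hdvd
      have hk : k ≤ d := by
        rw [mul_comm d ℓ] at hle
        exact Nat.le_of_mul_le_mul_left hle hℓ
      have hsub : d * ℓ - ℓ * k = ℓ * (d - k) := by
        rw [mul_comm d ℓ, Nat.mul_sub_left_distrib]
      have h2 : ℓ ∣ d * ℓ - ℓ * k := ⟨d - k, hsub⟩
      rw [if_pos h2, if_pos ⟨k, rfl⟩, coeff_reflect]
      congr 1
      rw [Nat.mul_div_cancel_left k hℓ, revAt_le hk, hsub, Nat.mul_div_cancel_left _ hℓ]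
    · rw [if_neg hdvd, if_neg]
      intro h2
      apply hdvd
      have : n = d * ℓ - (d * ℓ - n) := by omega
      rw [this]
      exact Nat.dvd_sub ⟨d, mul_comm d ℓ⟩ h2
  · rw [revAt_eq_self_of_lt hlt]
    by_cases hdvd : ℓ ∣ n
    · rw [if_pos hdvd, if_pos hdvd, coeff_reflect, revAt_eq_self_of_lt]
      obtain ⟨k, rfl⟩ := hdvd
      rw [Nat.mul_div_cancel_left k hℓ]
      by_contra hk
      have := Nat.mul_le_mul_left ℓ (Nat.not_lt.mp hk)
      rw [mul_comm d ℓ] at hlt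
      omega
    · rw [if_neg hdvd, if_neg hdvd]

lemma reverse_expand {F : Type*} [Field F] (f : F[X]) (ℓ : ℕ) (hℓ : 0 < ℓ) :
    (expand F ℓ f).reverse = expand F ℓ f.reverse := by
  unfold Polynomial.reverse
  rw [natDegree_expand, reflect_expand f ℓ f.natDegree hℓ]

lemma recip_mul {F : Type*} [Field F] (p q : F[X]) :
    recip (p * q) = recip p * recip q := by
  unfold recip
  rw [reverse_mul_of_domain, mul_coeff_zero, mul_inv, C_mul]
  ring

theorem stmt_7 {F : Type*} [Field F] {n ℓ M : ℕ} (hn : 1 ≤ n)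
    (hchar : ((2 * n : ℕ) : F) ≠ 0)
    (hℓpos : 0 < ℓ) (hℓdvd : ℓ ∣ 2 * n) (hM : M = 2 * n / ℓ)
    (h : F[X]) (hmonic : h.Monic) (hirr : Irreducible h) (hdvd : h ∣ X ^ M - 1)
    (hself : recip h = h)
    (p : F[X]) (hpmonic : p.Monic) (hpirr : Irreducible p)
    (hpdvd : p ∣ X ^ (2 * n) - 1)
    (hp : p ∣ h.comp (X ^ ℓ)) :
    recip p ∣ h.comp (X ^ ℓ) := by
  have hq : h.comp (X ^ ℓ) = expand F ℓ h := (expand_eq_comp_X_pow ℓ).symm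
  -- constant coefficient of h is nonzero
  have hM1 : 1 ≤ M := by
    subst hM
    exact Nat.one_le_div_iff hℓpos |>.mpr (Nat.le_of_dvd (by omega) hℓdvd)
  have hh0 : h.coeff 0 ≠ 0 := by
    intro h0
    have : (X : F[X]) ∣ X ^ M - 1 := (X_dvd_iff.mpr h0).trans hdvd
    have := X_dvd_iff.mp this
    rw [coeff_sub, coeff_X_pow, coeff_one] at this
    rw [if_neg (by omega : ¬(0 = M))] at this
    simp at this
  -- the composition is self-reciprocal
  have hqself : recip (h.comp (X ^ ℓ)) = h.comp (X ^ ℓ) := by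
    rw [hq]
    unfold recip
    have hc0 : (expand F ℓ h).coeff 0 = h.coeff 0 := by
      rw [coeff_expand hℓpos]
      simp
    rw [hc0, reverse_expand h ℓ hℓpos, ← expand_C (R := F) ℓ ((h.coeff 0)⁻¹), ← map_mul]
    rw [show C (h.coeff 0)⁻¹ * h.reverse = recip h from rfl, hself]
  obtain ⟨r, hr⟩ := hp
  rw [← hqself, hr, recip_mul]
  exact Dvd.intro _ rfl
end

section
/- Let h be a monic divisor of x^M − 1 in F[x], let Ĉ_h denote the ideal of F[x]/(x^M − 1) generated by the image of h, and let Ω : F[x]/(x^M − 1) → F[Q_{4n}] be the F-algebra homomorphism sending the class of x to x^ℓ. Then the left ideal C of F[Q_{4n}] generated by the set Ω(Ĉ_h) satisfies dim_F C = 2·ℓ·(M − deg h) = 2·ℓ·dim_F Ĉ_h. -/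
open Polynomial

namespace Stmt11Aux

/-- Coset representatives of the cyclic subgroup generated by `a ℓ` inside `Q_{4n}`. -/
def qrep (n ℓ : ℕ) : Bool × Fin ℓ → QuaternionGroup n
  | (false, r) => QuaternionGroup.a ((r : ℕ) : ZMod (2 * n))
  | (true, r) => QuaternionGroup.xa ((r : ℕ) : ZMod (2 * n))

lemma a_pow_cast {n : ℕ} (k q : ℕ) :
    (QuaternionGroup.a ((k : ZMod (2 * n)))) ^ q =
      QuaternionGroup.a (((k * q : ℕ) : ZMod (2 * n))) := by
  rw [← QuaternionGroup.a_one_pow, ← pow_mul, QuaternionGroup.a_one_pow]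

lemma qrep_decompose {n ℓ : ℕ} [NeZero n] (hℓ : 0 < ℓ) (g : QuaternionGroup n) :
    ∃ (i : Bool × Fin ℓ) (q : ℕ),
      g = qrep n ℓ i * QuaternionGroup.a (((ℓ * q : ℕ) : ZMod (2 * n))) := by
  haveI : NeZero (2 * n) := ⟨by have := NeZero.pos n; omega⟩
  have key : ∀ j : ZMod (2 * n),
      ((j.val % ℓ : ℕ) : ZMod (2 * n)) + ((ℓ * (j.val / ℓ) : ℕ) : ZMod (2 * n)) = j := by
    intro j
    rw [← Nat.cast_add, Nat.mod_add_div, ZMod.natCast_zmod_val]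
  cases g with
  | a j =>
      refine ⟨(false, ⟨j.val % ℓ, Nat.mod_lt _ hℓ⟩), j.val / ℓ, ?_⟩
      rw [qrep, QuaternionGroup.a_mul_a]
      exact congrArg _ (key j).symm
  | xa j =>
      refine ⟨(true, ⟨j.val % ℓ, Nat.mod_lt _ hℓ⟩), j.val / ℓ, ?_⟩
      rw [qrep, QuaternionGroup.xa_mul_a]
      exact congrArg _ (key j).symm

lemma qrep_zero {n ℓ : ℕ} (hℓ : 0 < ℓ) :
    qrep n ℓ (false, ⟨0, hℓ⟩) = 1 := by
  rw [qrep]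
  simp [QuaternionGroup.one_def, -QuaternionGroup.a_zero]

lemma finrank_quot {F : Type*} [Field F] (p : F[X]) (hp : p ≠ 0) :
    Module.finrank F (F[X] ⧸ Ideal.span ({p} : Set F[X])) = p.natDegree := by
  have h1 := (AdjoinRoot.powerBasis hp).finrank
  have h2 : (AdjoinRoot.powerBasis hp).dim = p.natDegree := rfl
  rw [h2] at h1
  exact h1

lemma finite_quot {F : Type*} [Field F] (p : F[X]) (hp : p ≠ 0) :
    Module.Finite F (F[X] ⧸ Ideal.span ({p} : Set F[X])) :=
  Module.Finite.of_basis (AdjoinRoot.powerBasis hp).basis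

end Stmt11Aux

set_option maxHeartbeats 1000000 in
set_option synthInstance.maxHeartbeats 400000 in
theorem stmt_11 {F : Type*} [Field F] {n ℓ M : ℕ} (hn : 1 ≤ n)
    (hchar : ((4 * n : ℕ) : F) ≠ 0)
    (hℓpos : 0 < ℓ) (hℓdvd : ℓ ∣ 2 * n) (hM : M = 2 * n / ℓ)
    (h : F[X]) (hmonic : h.Monic) (hdvd : h ∣ X ^ M - 1)
    (Ω : Rq F M →ₐ[F] MonoidAlgebra F (QuaternionGroup n))
    (hΩ : Ω (mkq F M X) =
      MonoidAlgebra.of F (QuaternionGroup n) (QuaternionGroup.a (ℓ : ZMod (2 * n))))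
    (Chat : Ideal (Rq F M)) (hChat : Chat = Ideal.span {mkq F M h})
    (C : Ideal (MonoidAlgebra F (QuaternionGroup n)))
    (hC : C = Ideal.span (⇑Ω '' (Chat : Set (Rq F M)))) :
    Module.finrank F (C.restrictScalars F) = 2 * ℓ * (M - h.natDegree) ∧
    Module.finrank F (C.restrictScalars F) =
      2 * ℓ * Module.finrank F (Chat.restrictScalars F) := by
  classical
  haveI : NeZero n := ⟨by omega⟩
  haveI : NeZero (2 * n) := ⟨by omega⟩
  have hℓM : ℓ * M = 2 * n := by rw [hM]; exact Nat.mul_div_cancel' hℓdvd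
  have hMpos : 0 < M := by
    rcases Nat.eq_zero_or_pos M with h0 | h0
    · rw [h0, mul_zero] at hℓM; omega
    · exact h0
  have hmonicXM : (X ^ M - 1 : F[X]).Monic := by
    have := monic_X_pow_sub_C (1 : F) hMpos.ne'
    simpa using this
  have hXM : (X ^ M - 1 : F[X]) ≠ 0 := hmonicXM.ne_zero
  have hdegXM : (X ^ M - 1 : F[X]).natDegree = M := by
    have := natDegree_X_pow_sub_C (n := M) (r := (1 : F))
    simpa using this
  -- dimension of `Rq F M`
  have hfinRq : Module.finrank F (Rq F M) = M := by
    rw [Stmt11Aux.finrank_quot _ hXM, hdegXM]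
  haveI : Module.Finite F (Rq F M) := Stmt11Aux.finite_quot _ hXM
  -- dimension of the group algebra
  let b : Module.Basis (QuaternionGroup n) F (MonoidAlgebra F (QuaternionGroup n)) :=
    MonoidAlgebra.basis (QuaternionGroup n) F
  have hfinA : Module.finrank F (MonoidAlgebra F (QuaternionGroup n)) = 4 * n := by
    rw [Module.finrank_eq_card_basis b, QuaternionGroup.card]
  haveI : Module.Finite F (MonoidAlgebra F (QuaternionGroup n)) := Module.Finite.of_basis b
  -- dimension of `Chat`
  have hle : Ideal.span ({X ^ M - 1} : Set F[X]) ≤ Ideal.span {h} := by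
    rw [Ideal.span_le]
    intro p hp
    rw [Set.mem_singleton_iff] at hp
    subst hp
    rw [SetLike.mem_coe, Ideal.mem_span_singleton]
    exact hdvd
  have hChat' : Chat = Ideal.map
      (Ideal.Quotient.mkₐ F (Ideal.span ({X ^ M - 1} : Set F[X]))) (Ideal.span {h}) := by
    rw [hChat, Ideal.map_span, Set.image_singleton]
    rfl
  have hquot : Module.finrank F (Rq F M ⧸ Chat) = h.natDegree := by
    rw [hChat']
    rw [(DoubleQuot.quotQuotEquivQuotOfLEₐ F hle).toLinearEquiv.finrank_eq]
    exact Stmt11Aux.finrank_quot h hmonic.ne_zero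
  have hWq : Module.finrank F (Rq F M ⧸ Chat.restrictScalars F) = h.natDegree := by
    rw [(Submodule.Quotient.restrictScalarsEquiv F Chat).finrank_eq, hquot]
  have hsum := Submodule.finrank_quotient_add_finrank (Chat.restrictScalars F)
  have hW : Module.finrank F (Chat.restrictScalars F) = M - h.natDegree := by
    rw [hWq, hfinRq] at hsum
    omega
  -- the main linear map
  let u : Bool × Fin ℓ → MonoidAlgebra F (QuaternionGroup n) :=
    fun i => MonoidAlgebra.of F (QuaternionGroup n) (Stmt11Aux.qrep n ℓ i)
  let Ψ : ((Bool × Fin ℓ) → Rq F M) →ₗ[F] MonoidAlgebra F (QuaternionGroup n) :=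
    ∑ i, (LinearMap.mulLeft F (u i)) ∘ₗ Ω.toLinearMap ∘ₗ LinearMap.proj i
  have hΨ : ∀ f, Ψ f = ∑ i, u i * Ω (f i) := by
    intro f
    simp [Ψ, LinearMap.sum_apply]
  have hΨsingle : ∀ (i : Bool × Fin ℓ) (v : Rq F M),
      Ψ (Pi.single i v) = u i * Ω v := by
    intro i v
    rw [hΨ, Finset.sum_eq_single i]
    · rw [Pi.single_eq_same]
    · intro j _ hj
      rw [Pi.single_eq_of_ne hj, map_zero, mul_zero]
    · intro hmem
      exact absurd (Finset.mem_univ i) hmem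
  have hΩpow : ∀ q : ℕ, Ω (mkq F M (X ^ q)) =
      MonoidAlgebra.of F (QuaternionGroup n)
        (QuaternionGroup.a (((ℓ * q : ℕ) : ZMod (2 * n)))) := by
    intro q
    rw [map_pow, map_pow, hΩ, ← map_pow, Stmt11Aux.a_pow_cast]
  have hofmem : ∀ (g : QuaternionGroup n) (c : Rq F M),
      ∃ (i : Bool × Fin ℓ) (q : ℕ),
        MonoidAlgebra.of F (QuaternionGroup n) g * Ω c =
          u i * Ω (mkq F M (X ^ q) * c) := by
    intro g c
    obtain ⟨i, q, hg⟩ := Stmt11Aux.qrep_decompose hℓpos g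
    refine ⟨i, q, ?_⟩
    rw [hg, map_mul (MonoidAlgebra.of F (QuaternionGroup n)), map_mul Ω, ← hΩpow, mul_assoc]
  -- surjectivity of `Ψ`
  have hrangeΨ : ∀ x : MonoidAlgebra F (QuaternionGroup n), x ∈ LinearMap.range Ψ := by
    intro x
    refine MonoidAlgebra.induction_on x ?_ (fun f g hf hg => add_mem hf hg)
      (fun r f hf => Submodule.smul_mem _ r hf)
    intro g
    obtain ⟨i, q, hgq⟩ := hofmem g 1
    simp only [map_one, mul_one] at hgq
    exact ⟨Pi.single i (mkq F M (X ^ q)), by rw [hΨsingle, ← hgq]⟩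
  have hΨsurj : Function.Surjective Ψ := fun x => hrangeΨ x
  have hfinPi : Module.finrank F ((Bool × Fin ℓ) → Rq F M) = 4 * n := by
    rw [Module.finrank_pi_fintype, Finset.sum_const, Finset.card_univ, Fintype.card_prod,
      Fintype.card_bool, Fintype.card_fin, smul_eq_mul, hfinRq, mul_assoc, hℓM]
    omega
  have hΨinj : Function.Injective Ψ :=
    (LinearMap.injective_iff_surjective_of_finrank_eq_finrank
      (by rw [hfinPi, hfinA])).mpr hΨsurj
  -- restricting to `Chat`
  let W : Submodule F (Rq F M) := Chat.restrictScalars F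
  let Φ : ((Bool × Fin ℓ) → W) →ₗ[F] MonoidAlgebra F (QuaternionGroup n) :=
    Ψ ∘ₗ LinearMap.pi (fun i => W.subtype ∘ₗ LinearMap.proj i)
  have hΦ : ∀ f, Φ f = Ψ (fun i => (f i : Rq F M)) := fun f => rfl
  have hΦinj : Function.Injective Φ := by
    intro f g hfg
    have := hΨinj hfg
    funext i
    exact Subtype.ext (congrFun this i)
  have hcoe_single : ∀ (i : Bool × Fin ℓ) (w : W),
      (fun j => (((Pi.single i w : Bool × Fin ℓ → W) j : W) : Rq F M)) = Pi.single i (w : Rq F M) := by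
    intro i w
    funext j
    rcases eq_or_ne j i with rfl | hne
    · simp
    · simp [Pi.single_eq_of_ne hne]
  have hΦsingle : ∀ (i : Bool × Fin ℓ) (w : W), Φ (Pi.single i w) = u i * Ω (w : Rq F M) := by
    intro i w
    rw [hΦ, hcoe_single, hΨsingle]
  -- range Φ is stable under left multiplication
  have hmul : ∀ (a x : MonoidAlgebra F (QuaternionGroup n)),
      x ∈ LinearMap.range Φ → a * x ∈ LinearMap.range Φ := by
    intro a
    refine MonoidAlgebra.induction_on
      (motive := fun a => ∀ x ∈ LinearMap.range Φ, a * x ∈ LinearMap.range Φ) a ?_ ?_ ?_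
    · intro g x hx
      obtain ⟨f, rfl⟩ := hx
      rw [hΦ, hΨ, Finset.mul_sum]
      refine Submodule.sum_mem _ fun i _ => ?_
      rw [← mul_assoc, ← map_mul (MonoidAlgebra.of F (QuaternionGroup n))]
      obtain ⟨i', q, hq⟩ := hofmem (g * Stmt11Aux.qrep n ℓ i) (f i)
      rw [hq]
      refine ⟨Pi.single i' ⟨mkq F M (X ^ q) * (f i : Rq F M), ?_⟩, ?_⟩
      · exact Chat.mul_mem_left _ (f i).2
      · rw [hΦsingle]
    · intro f g hf hg x hx
      rw [add_mul]
      exact add_mem (hf x hx) (hg x hx)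
    · intro r f hf x hx
      rw [smul_mul_assoc]
      exact Submodule.smul_mem _ r (hf x hx)
  -- `C` equals the range of `Φ`
  have hrangeΦ : (C.restrictScalars F) = LinearMap.range Φ := by
    apply le_antisymm
    · intro x hx
      rw [Submodule.restrictScalars_mem, hC] at hx
      induction hx using Submodule.span_induction with
      | mem x hx =>
          obtain ⟨c, hc, rfl⟩ := hx
          refine ⟨Pi.single (false, ⟨0, hℓpos⟩) ⟨c, hc⟩, ?_⟩
          rw [hΦsingle]
          show u (false, ⟨0, hℓpos⟩) * Ω c = Ω c
          have : u (false, ⟨0, hℓpos⟩) = 1 := by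
            show MonoidAlgebra.of F (QuaternionGroup n) _ = 1
            rw [Stmt11Aux.qrep_zero hℓpos, map_one]
          rw [this, one_mul]
      | zero => exact zero_mem _
      | add x y _ _ hx hy => exact add_mem hx hy
      | smul a x _ hx => simpa [smul_eq_mul] using hmul a x hx
    · intro x hx
      obtain ⟨f, rfl⟩ := hx
      rw [Submodule.restrictScalars_mem, hΦ, hΨ]
      refine Submodule.sum_mem _ fun i _ => ?_
      refine Ideal.mul_mem_left C (u i) ?_
      rw [hC]
      exact Ideal.subset_span ⟨_, (f i).2, rfl⟩
  haveI : Module.Finite F W := inferInstance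
  have hfinC : Module.finrank F (C.restrictScalars F) = 2 * ℓ * Module.finrank F W := by
    rw [hrangeΦ, LinearMap.finrank_range_of_inj hΦinj, Module.finrank_pi_fintype,
      Finset.sum_const, Finset.card_univ, Fintype.card_prod, Fintype.card_bool, Fintype.card_fin,
      smul_eq_mul]
  exact ⟨by rw [hfinC, hW], hfinC⟩
end

section
/- Assume n is even and let e₂ = (2n)^{−1}·∑_{i=0}^{2n−1} (−1)^i x^i ∈ F[Q_{4n}]. Then e₂ is a central idempotent of F[Q_{4n}], the two-sided ideal F[Q_{4n}]·e₂ has F-dimension 2, and every left ideal of F[Q_{4n}] contained in F[Q_{4n}]·e₂ is one of the following four: 0, the one-dimensional span F·(e₂ + y·e₂), the one-dimensional span F·(e₂ − y·e₂), or F[Q_{4n}]·e₂ itself. -/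
namespace Stmt13Aux

open QuaternionGroup MonoidAlgebra Finset

variable (F : Type*) [Field F] (n : ℕ)

/-- The sign character on `ZMod (2*n)`. -/
noncomputable def chi (j : ZMod (2 * n)) : F := (-1) ^ j.val

variable {n}

theorem chi_natCast [NeZero n] (i : ℕ) : chi F n (i : ZMod (2 * n)) = (-1) ^ i := by
  haveI : NeZero (2 * n) := ⟨by have := NeZero.ne n; omega⟩
  rw [chi, ZMod.val_natCast, neg_one_pow_eq_pow_mod_two,
    Nat.mod_mod_of_dvd _ ⟨n, rfl⟩, ← neg_one_pow_eq_pow_mod_two]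

theorem chi_add [NeZero n] (j k : ZMod (2 * n)) :
    chi F n (j + k) = chi F n j * chi F n k := by
  haveI : NeZero (2 * n) := ⟨by have := NeZero.ne n; omega⟩
  rw [chi, chi, chi, ZMod.val_add, neg_one_pow_eq_pow_mod_two,
    Nat.mod_mod_of_dvd _ ⟨n, rfl⟩, ← neg_one_pow_eq_pow_mod_two, pow_add]

theorem chi_mul_self (j : ZMod (2 * n)) : chi F n j * chi F n j = 1 := by
  rw [chi, ← mul_pow]; norm_num

theorem chi_ne_zero (j : ZMod (2 * n)) : chi F n j ≠ 0 :=
  left_ne_zero_of_mul_eq_one (chi_mul_self F j)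

theorem chi_neg [NeZero n] (k : ZMod (2 * n)) : chi F n (-k) = chi F n k := by
  have h1 : chi F n (-k) * chi F n k = 1 := by
    rw [← chi_add, neg_add_cancel, chi]; simp
  exact mul_right_cancel₀ (chi_ne_zero F k) (h1.trans (chi_mul_self F k).symm)

theorem chi_sub [NeZero n] (j k : ZMod (2 * n)) :
    chi F n (j - k) = chi F n j * chi F n k := by
  rw [sub_eq_add_neg, chi_add, chi_neg]

variable (n) [NeZero n]

/-- `S = ∑ (-1)^j x^j`. -/
noncomputable def S : MonoidAlgebra F (QuaternionGroup n) :=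
  ∑ j : ZMod (2 * n), chi F n j • of F (QuaternionGroup n) (a j)

/-- `T = ∑ (-1)^j y x^j`. -/
noncomputable def T : MonoidAlgebra F (QuaternionGroup n) :=
  ∑ j : ZMod (2 * n), chi F n j • of F (QuaternionGroup n) (xa j)

variable {n}

theorem a_mul_S (k : ZMod (2 * n)) :
    of F (QuaternionGroup n) (a k) * S F n = chi F n k • S F n := by
  rw [S, Finset.mul_sum, Finset.smul_sum]
  calc ∑ j : ZMod (2 * n), of F (QuaternionGroup n) (a k) * (chi F n j • of F (QuaternionGroup n) (a j))
      = ∑ j : ZMod (2 * n), chi F n j • of F (QuaternionGroup n) (a (k + j)) := by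
        simp [mul_smul_comm, ← map_mul, a_mul_a]
    _ = ∑ j : ZMod (2 * n), chi F n k • chi F n j • of F (QuaternionGroup n) (a j) := by
        refine Fintype.sum_equiv (Equiv.addLeft k) _ _ (fun j => ?_)
        simp only [Equiv.coe_addLeft]
        rw [smul_smul, chi_add, ← mul_assoc, chi_mul_self, one_mul]

theorem S_mul_a (k : ZMod (2 * n)) :
    S F n * of F (QuaternionGroup n) (a k) = chi F n k • S F n := by
  rw [S, Finset.sum_mul, Finset.smul_sum]
  calc ∑ j : ZMod (2 * n), (chi F n j • of F (QuaternionGroup n) (a j)) * of F (QuaternionGroup n) (a k)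
      = ∑ j : ZMod (2 * n), chi F n j • of F (QuaternionGroup n) (a (j + k)) := by
        simp [smul_mul_assoc, ← map_mul, a_mul_a]
    _ = ∑ j : ZMod (2 * n), chi F n k • chi F n j • of F (QuaternionGroup n) (a j) := by
        refine Fintype.sum_equiv (Equiv.addRight k) _ _ (fun j => ?_)
        simp only [Equiv.coe_addRight]
        rw [smul_smul, chi_add, mul_comm (chi F n j), ← mul_assoc, chi_mul_self, one_mul]

theorem xa0_mul_S :
    of F (QuaternionGroup n) (xa 0) * S F n = T F n := by
  rw [S, T, Finset.mul_sum]
  simp [mul_smul_comm, ← map_mul, xa_mul_a, zero_add]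

theorem S_mul_xa0 :
    S F n * of F (QuaternionGroup n) (xa 0) = T F n := by
  rw [S, T, Finset.sum_mul]
  calc ∑ j : ZMod (2 * n), (chi F n j • of F (QuaternionGroup n) (a j)) * of F (QuaternionGroup n) (xa 0)
      = ∑ j : ZMod (2 * n), chi F n j • of F (QuaternionGroup n) (xa (-j)) := by
        simp [smul_mul_assoc, ← map_mul, a_mul_xa, zero_sub]
    _ = ∑ j : ZMod (2 * n), chi F n j • of F (QuaternionGroup n) (xa j) := by
        refine Fintype.sum_equiv (Equiv.neg _) _ _ (fun j => ?_)
        simp only [Equiv.neg_apply, neg_neg]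
        rw [chi_neg]

theorem xa0_mul_T (hne : Even n) :
    of F (QuaternionGroup n) (xa 0) * T F n = S F n := by
  have h : (xa 0 * xa 0 : QuaternionGroup n) = a (n : ZMod (2 * n)) := by
    rw [xa_mul_xa]; norm_num
  rw [← xa0_mul_S, ← mul_assoc, ← map_mul, h, a_mul_S, chi_natCast, hne.neg_one_pow, one_smul]

theorem T_mul_a (k : ZMod (2 * n)) :
    T F n * of F (QuaternionGroup n) (a k) = chi F n k • T F n := by
  rw [← xa0_mul_S, mul_assoc, S_mul_a, mul_smul_comm]

theorem xa_mul_S (k : ZMod (2 * n)) :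
    of F (QuaternionGroup n) (xa k) * S F n = chi F n k • T F n := by
  have h : (xa k : QuaternionGroup n) = xa 0 * a k := by rw [xa_mul_a, zero_add]
  rw [h, map_mul, mul_assoc, a_mul_S, mul_smul_comm, xa0_mul_S]

theorem S_mul_xa (k : ZMod (2 * n)) :
    S F n * of F (QuaternionGroup n) (xa k) = chi F n k • T F n := by
  have h : (xa k : QuaternionGroup n) = xa 0 * a k := by rw [xa_mul_a, zero_add]
  rw [h, map_mul, ← mul_assoc, S_mul_xa0, T_mul_a]

theorem S_mul_S : S F n * S F n = ((2 * n : ℕ) : F) • S F n := by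
  nth_rewrite 1 [S]
  rw [Finset.sum_mul]
  have : ∀ k : ZMod (2 * n),
      (chi F n k • of F (QuaternionGroup n) (a k)) * S F n = S F n := fun k => by
    rw [smul_mul_assoc, a_mul_S, smul_smul, chi_mul_self, one_smul]
  rw [Finset.sum_congr rfl (fun k _ => this k), Finset.sum_const, Finset.card_univ,
    ZMod.card, Nat.cast_smul_eq_nsmul]

theorem S_apply_a0 : (S F n : MonoidAlgebra F (QuaternionGroup n)).coeff (a 0) = 1 := by
  have h : ∀ x : ZMod (2 * n), (a x : QuaternionGroup n) = 1 ↔ x = 0 := fun x => by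
    rw [one_def, a.injEq]
  rw [S, MonoidAlgebra.coeff_sum, Finsupp.finset_sum_apply]
  simp [MonoidAlgebra.coeff_single, Finsupp.single_apply, chi, h]

theorem S_apply_xa0 : (S F n : MonoidAlgebra F (QuaternionGroup n)).coeff (xa 0) = 0 := by
  rw [S, MonoidAlgebra.coeff_sum, Finsupp.finset_sum_apply]
  simp [MonoidAlgebra.coeff_single, Finsupp.single_apply]

theorem T_apply_a0 : (T F n : MonoidAlgebra F (QuaternionGroup n)).coeff (a 0) = 0 := by
  have h : ∀ x : ZMod (2 * n), (xa x : QuaternionGroup n) ≠ 1 := fun x hc => by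
    rw [one_def] at hc; cases hc
  rw [T, MonoidAlgebra.coeff_sum, Finsupp.finset_sum_apply]
  simp [MonoidAlgebra.coeff_single, Finsupp.single_apply, h]

theorem T_apply_xa0 : (T F n : MonoidAlgebra F (QuaternionGroup n)).coeff (xa 0) = 1 := by
  rw [T, MonoidAlgebra.coeff_sum, Finsupp.finset_sum_apply]
  simp [MonoidAlgebra.coeff_single, Finsupp.single_apply, chi]

theorem range_sum_eq (hn : 1 ≤ n) :
    ∑ i ∈ Finset.range (2 * n),
      ((-1 : F) ^ i) • (of F (QuaternionGroup n) (a 1)) ^ i = S F n := by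
  haveI : NeZero (2 * n) := ⟨by omega⟩
  rw [S]
  refine Finset.sum_nbij' (fun i => (i : ZMod (2 * n))) (fun j => j.val) ?_ ?_ ?_ ?_ ?_
  · intro i _; exact Finset.mem_univ _
  · intro j _; exact Finset.mem_range.2 (ZMod.val_lt j)
  · intro i hi; exact ZMod.val_cast_of_lt (Finset.mem_range.1 hi)
  · intro j _; exact ZMod.natCast_rightInverse j
  · intro i _
    rw [← map_pow, a_one_pow, chi_natCast]

end Stmt13Aux

open Stmt13Aux QuaternionGroup MonoidAlgebra in
set_option synthInstance.maxHeartbeats 400000 in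
theorem stmt_13 {F : Type*} [Field F] {n : ℕ} (hn : 1 ≤ n) (hne : Even n)
    (hchar : ((4 * n : ℕ) : F) ≠ 0)
    (x y e₂ : MonoidAlgebra F (QuaternionGroup n))
    (hx : x = MonoidAlgebra.of F (QuaternionGroup n) (QuaternionGroup.a 1))
    (hy : y = MonoidAlgebra.of F (QuaternionGroup n) (QuaternionGroup.xa 0))
    (he₂ : e₂ = ((2 * n : ℕ) : F)⁻¹ •
      ∑ i ∈ Finset.range (2 * n), ((-1 : F) ^ i) • x ^ i) :
    e₂ * e₂ = e₂ ∧ (∀ z, e₂ * z = z * e₂) ∧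
    Module.finrank F ((Ideal.span {e₂}).restrictScalars F) = 2 ∧
    Module.finrank F (Submodule.span F {e₂ + y * e₂}) = 1 ∧
    Module.finrank F (Submodule.span F {e₂ - y * e₂}) = 1 ∧
    ∀ C : Ideal (MonoidAlgebra F (QuaternionGroup n)), C ≤ Ideal.span {e₂} →
      C = ⊥ ∨
      C.restrictScalars F = Submodule.span F {e₂ + y * e₂} ∨
      C.restrictScalars F = Submodule.span F {e₂ - y * e₂} ∨
      C = Ideal.span {e₂} := by
  haveI : NeZero n := ⟨by omega⟩
  have h4eq : ((4 * n : ℕ) : F) = 2 * ((2 * n : ℕ) : F) := by push_cast; ring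
  have h2n : ((2 * n : ℕ) : F) ≠ 0 := by
    intro h; exact hchar (by rw [h4eq, h, mul_zero])
  have h2F : (2 : F) ≠ 0 := by
    intro h; exact hchar (by rw [h4eq, h, zero_mul])
  have hcne : ((2 * n : ℕ) : F)⁻¹ ≠ 0 := inv_ne_zero h2n
  have he : e₂ = ((2 * n : ℕ) : F)⁻¹ • S F n := by rw [he₂, hx, range_sum_eq F hn]
  have hyT : y * e₂ = ((2 * n : ℕ) : F)⁻¹ • T F n := by
    rw [he, hy, mul_smul_comm, xa0_mul_S]
  have hyy : y * (y * e₂) = e₂ := by rw [hyT, hy, mul_smul_comm, xa0_mul_T F hne, he]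
  have haE : ∀ k, of F (QuaternionGroup n) (a k) * e₂ = chi F n k • e₂ := fun k => by
    rw [he, mul_smul_comm, a_mul_S, smul_comm]
  have hEa : ∀ k, e₂ * of F (QuaternionGroup n) (a k) = chi F n k • e₂ := fun k => by
    rw [he, smul_mul_assoc, S_mul_a, smul_comm]
  have hxaE : ∀ k, of F (QuaternionGroup n) (xa k) * e₂ = chi F n k • (y * e₂) := fun k => by
    rw [hyT, he, mul_smul_comm, xa_mul_S, smul_comm]
  have hExa : ∀ k, e₂ * of F (QuaternionGroup n) (xa k) = chi F n k • (y * e₂) := fun k => by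
    rw [hyT, he, smul_mul_assoc, S_mul_xa, smul_comm]
  have hidem : e₂ * e₂ = e₂ := by
    rw [he, smul_mul_assoc, mul_smul_comm, S_mul_S, smul_smul, smul_smul,
      mul_assoc, inv_mul_cancel₀ h2n, mul_one]
  have hcomm : ∀ z, e₂ * z = z * e₂ := by
    intro z
    induction z using MonoidAlgebra.induction_on with
    | of g =>
      cases g with
      | a k => rw [haE, hEa]
      | xa k => rw [hxaE, hExa]
    | add f g hf hg => rw [mul_add, add_mul, hf, hg]
    | smul r f hf => rw [mul_smul_comm, smul_mul_assoc, hf]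
  have hspan : (Ideal.span {e₂}).restrictScalars F = Submodule.span F {e₂, y * e₂} := by
    apply le_antisymm
    · intro z hz
      rw [Submodule.restrictScalars_mem] at hz
      obtain ⟨w, rfl⟩ := Submodule.mem_span_singleton.1 hz
      clear hz
      rw [smul_eq_mul]
      have h1 : e₂ ∈ Submodule.span F ({e₂, y * e₂} : Set _) :=
        Submodule.subset_span (by simp)
      have h2 : y * e₂ ∈ Submodule.span F ({e₂, y * e₂} : Set _) :=
        Submodule.subset_span (by simp)
      induction w using MonoidAlgebra.induction_on with
      | of g =>
        cases g with
        | a k => rw [haE]; exact Submodule.smul_mem _ _ h1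
        | xa k => rw [hxaE]; exact Submodule.smul_mem _ _ h2
      | add f g hf hg => rw [add_mul]; exact Submodule.add_mem _ hf hg
      | smul r f hf => rw [smul_mul_assoc]; exact Submodule.smul_mem _ _ hf
    · rw [Submodule.span_le]
      rintro z hz
      simp only [Set.mem_insert_iff, Set.mem_singleton_iff] at hz
      rcases hz with rfl | rfl
      · exact Ideal.subset_span (Set.mem_singleton _)
      · exact Ideal.mul_mem_left _ y (Ideal.subset_span (Set.mem_singleton _))
  have hea0 : e₂.coeff (a 0) = ((2 * n : ℕ) : F)⁻¹ := by
    rw [he]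
    show (((2 * n : ℕ) : F)⁻¹ • S F n).coeff (a 0) = _
    rw [MonoidAlgebra.coeff_smul_apply, S_apply_a0, smul_eq_mul, mul_one]
  have hexa0 : e₂.coeff (xa 0) = 0 := by
    rw [he]
    show (((2 * n : ℕ) : F)⁻¹ • S F n).coeff (xa 0) = _
    rw [MonoidAlgebra.coeff_smul_apply, S_apply_xa0, smul_eq_mul, mul_zero]
  have hya0 : (y * e₂).coeff (a 0) = 0 := by
    rw [hyT]
    show (((2 * n : ℕ) : F)⁻¹ • T F n).coeff (a 0) = _
    rw [MonoidAlgebra.coeff_smul_apply, T_apply_a0, smul_eq_mul, mul_zero]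
  have hyxa0 : (y * e₂).coeff (xa 0) = ((2 * n : ℕ) : F)⁻¹ := by
    rw [hyT]
    show (((2 * n : ℕ) : F)⁻¹ • T F n).coeff (xa 0) = _
    rw [MonoidAlgebra.coeff_smul_apply, T_apply_xa0, smul_eq_mul, mul_one]
  have happly : ∀ (s t : F) (g : QuaternionGroup n),
      (s • e₂ + t • (y * e₂)).coeff g = s * e₂.coeff g + t * (y * e₂).coeff g := by
    intro s t g
    rw [MonoidAlgebra.coeff_add, Finsupp.add_apply, MonoidAlgebra.coeff_smul_apply,
      MonoidAlgebra.coeff_smul_apply, smul_eq_mul, smul_eq_mul]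
  have hpair : LinearIndependent F ![e₂, y * e₂] := by
    rw [LinearIndependent.pair_iff]
    intro s t hst
    have h0 := congrArg (fun f : MonoidAlgebra F (QuaternionGroup n) => f.coeff (a 0)) hst
    have h1 := congrArg (fun f : MonoidAlgebra F (QuaternionGroup n) => f.coeff (xa 0)) hst
    simp only [happly, hea0, hya0, hexa0, hyxa0, mul_zero, add_zero, zero_add,
      MonoidAlgebra.coeff_zero, Finsupp.zero_apply] at h0 h1
    have hs : s = 0 := by
      rcases mul_eq_zero.1 h0 with h | h
      · exact h
      · exact absurd h hcne
    have ht : t = 0 := by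
      rcases mul_eq_zero.1 h1 with h | h
      · exact h
      · exact absurd h hcne
    exact ⟨hs, ht⟩
  have hu0 : e₂ + y * e₂ ≠ 0 := by
    intro h
    have := congrArg (fun f : MonoidAlgebra F (QuaternionGroup n) => f.coeff (a 0)) h
    rw [show (e₂ + y * e₂).coeff (a 0) = e₂.coeff (a 0) + (y * e₂).coeff (a 0) from Finsupp.add_apply _ _ _,
      hea0, hya0, add_zero] at this
    exact hcne (by simpa using this)
  have hv0 : e₂ - y * e₂ ≠ 0 := by
    intro h
    have := congrArg (fun f : MonoidAlgebra F (QuaternionGroup n) => f.coeff (a 0)) h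
    rw [show (e₂ - y * e₂).coeff (a 0) = e₂.coeff (a 0) - (y * e₂).coeff (a 0) from Finsupp.sub_apply _ _ _,
      hea0, hya0, sub_zero] at this
    exact hcne (by simpa using this)
  have hset : ({e₂, y * e₂} : Set (MonoidAlgebra F (QuaternionGroup n)))
      = Set.range ![e₂, y * e₂] := by
    ext z
    simp only [Set.mem_insert_iff, Set.mem_singleton_iff, Set.mem_range,
      Fin.exists_fin_two, Matrix.cons_val_zero, Matrix.cons_val_one, Matrix.head_cons]
    exact or_congr eq_comm eq_comm
  have hrank2 : Module.finrank F ((Ideal.span {e₂}).restrictScalars F) = 2 := by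
    rw [hspan, hset, finrank_span_eq_card hpair, Fintype.card_fin]
  have hkey : ∀ z ∈ Ideal.span {e₂}, ∃ s t : F, s • e₂ + t • (y * e₂) = z := by
    intro z hz
    have hz' : z ∈ Submodule.span F {e₂, y * e₂} := by
      rw [← hspan]; exact hz
    exact Submodule.mem_span_pair.1 hz'
  have hyz : ∀ s t : F, y * (s • e₂ + t • (y * e₂)) = t • e₂ + s • (y * e₂) := by
    intro s t
    rw [mul_add, mul_smul_comm, mul_smul_comm, hyy, add_comm]
  refine ⟨hidem, hcomm, hrank2, finrank_span_singleton hu0, finrank_span_singleton hv0, ?_⟩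
  intro C hC
  by_cases hu : e₂ + y * e₂ ∈ C
  · by_cases hv : e₂ - y * e₂ ∈ C
    · right; right; right
      refine le_antisymm hC ?_
      rw [Ideal.span_le, Set.singleton_subset_iff]
      have hmem : (2 : F)⁻¹ • ((e₂ + y * e₂) + (e₂ - y * e₂)) ∈ C :=
        Submodule.smul_of_tower_mem _ _ (C.add_mem hu hv)
      have heq : (e₂ + y * e₂) + (e₂ - y * e₂) = (2 : F) • e₂ := by module
      rw [heq, smul_smul, inv_mul_cancel₀ h2F, one_smul] at hmem
      exact hmem
    · right; left
      apply le_antisymm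
      · intro z hz
        rw [Submodule.restrictScalars_mem] at hz
        obtain ⟨s, t, rfl⟩ := hkey z (hC hz)
        have hsub : (s - t) • (e₂ - y * e₂) ∈ C := by
          have h1 : (s • e₂ + t • (y * e₂)) - y * (s • e₂ + t • (y * e₂))
              = (s - t) • (e₂ - y * e₂) := by
            rw [hyz]; module
          rw [← h1]
          exact C.sub_mem hz (Ideal.mul_mem_left _ y hz)
        have hst : s = t := by
          by_contra hne'
          apply hv
          have hmem := Submodule.smul_of_tower_mem C (s - t)⁻¹ hsub
          rwa [smul_smul, inv_mul_cancel₀ (sub_ne_zero.2 hne'), one_smul] at hmem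
        subst hst
        exact Submodule.mem_span_singleton.2 ⟨s, by module⟩
      · rw [Submodule.span_le, Set.singleton_subset_iff]
        exact hu
  · by_cases hv : e₂ - y * e₂ ∈ C
    · right; right; left
      apply le_antisymm
      · intro z hz
        rw [Submodule.restrictScalars_mem] at hz
        obtain ⟨s, t, rfl⟩ := hkey z (hC hz)
        have hsub : (s + t) • (e₂ + y * e₂) ∈ C := by
          have h1 : (s • e₂ + t • (y * e₂)) + y * (s • e₂ + t • (y * e₂))
              = (s + t) • (e₂ + y * e₂) := by
            rw [hyz]; module
          rw [← h1]
          exact C.add_mem hz (Ideal.mul_mem_left _ y hz)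
        have hst : t = -s := by
          by_contra hne'
          apply hu
          have hs0 : s + t ≠ 0 := fun h => hne' (eq_neg_of_add_eq_zero_right h)
          have hmem := Submodule.smul_of_tower_mem C (s + t)⁻¹ hsub
          rwa [smul_smul, inv_mul_cancel₀ hs0, one_smul] at hmem
        subst hst
        exact Submodule.mem_span_singleton.2 ⟨s, by module⟩
      · rw [Submodule.span_le, Set.singleton_subset_iff]
        exact hv
    · left
      rw [eq_bot_iff]
      intro z hz
      obtain ⟨s, t, rfl⟩ := hkey z (hC hz)
      have h1 : s + t = 0 := by
        by_contra h1
        apply hu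
        have hsub : (s + t) • (e₂ + y * e₂) ∈ C := by
          have hh : (s • e₂ + t • (y * e₂)) + y * (s • e₂ + t • (y * e₂))
              = (s + t) • (e₂ + y * e₂) := by
            rw [hyz]; module
          rw [← hh]
          exact C.add_mem hz (Ideal.mul_mem_left _ y hz)
        have hmem := Submodule.smul_of_tower_mem C (s + t)⁻¹ hsub
        rwa [smul_smul, inv_mul_cancel₀ h1, one_smul] at hmem
      have h2 : s - t = 0 := by
        by_contra h2
        apply hv
        have hsub : (s - t) • (e₂ - y * e₂) ∈ C := by
          have hh : (s • e₂ + t • (y * e₂)) - y * (s • e₂ + t • (y * e₂))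
              = (s - t) • (e₂ - y * e₂) := by
            rw [hyz]; module
          rw [← hh]
          exact C.sub_mem hz (Ideal.mul_mem_left _ y hz)
        have hmem := Submodule.smul_of_tower_mem C (s - t)⁻¹ hsub
        rwa [smul_smul, inv_mul_cancel₀ h2, one_smul] at hmem
      have hs : s = 0 := by
        have h2s : (2 : F) * s = 0 := by linear_combination h1 + h2
        exact (mul_eq_zero.1 h2s).resolve_left h2F
      have ht : t = 0 := by linear_combination h1 - hs
      simp [hs, ht]
end

section
/- Assume n is odd and that there exists u ∈ F with u² = −1, and let e' = (2n)^{−1}·∑_{i=0}^{2n−1} (−1)^i x^i ∈ F[Q_{4n}]. Then e' is a central idempotent of F[Q_{4n}], the elements (e' + u·y·e')/2 and (e' − u·y·e')/2 are idempotents, and every left ideal of F[Q_{4n}] contained in F[Q_{4n}]·e' is one of the following four: 0, the one-dimensional span F·(e' + u·y·e'), the one-dimensional span F·(e' − u·y·e'), or F[Q_{4n}]·e' itself. -/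
set_option maxHeartbeats 2000000 in
set_option synthInstance.maxHeartbeats 400000 in
theorem stmt_14 {F : Type*} [Field F] {n : ℕ} (hn : 1 ≤ n) (hno : Odd n)
    (hchar : ((4 * n : ℕ) : F) ≠ 0)
    (u : F) (hu : u ^ 2 = -1)
    (x y e' : MonoidAlgebra F (QuaternionGroup n))
    (hx : x = MonoidAlgebra.of F (QuaternionGroup n) (QuaternionGroup.a 1))
    (hy : y = MonoidAlgebra.of F (QuaternionGroup n) (QuaternionGroup.xa 0))
    (he' : e' = ((2 * n : ℕ) : F)⁻¹ •
      ∑ i ∈ Finset.range (2 * n), ((-1 : F) ^ i) • x ^ i) :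
    e' * e' = e' ∧ (∀ z, e' * z = z * e') ∧
    ((2 : F)⁻¹ • (e' + u • (y * e'))) * ((2 : F)⁻¹ • (e' + u • (y * e'))) =
      (2 : F)⁻¹ • (e' + u • (y * e')) ∧
    ((2 : F)⁻¹ • (e' - u • (y * e'))) * ((2 : F)⁻¹ • (e' - u • (y * e'))) =
      (2 : F)⁻¹ • (e' - u • (y * e')) ∧
    Module.finrank F (Submodule.span F {e' + u • (y * e')}) = 1 ∧
    Module.finrank F (Submodule.span F {e' - u • (y * e')}) = 1 ∧
    ∀ C : Ideal (MonoidAlgebra F (QuaternionGroup n)), C ≤ Ideal.span {e'} →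
      C = ⊥ ∨
      C.restrictScalars F = Submodule.span F {e' + u • (y * e')} ∨
      C.restrictScalars F = Submodule.span F {e' - u • (y * e')} ∨
      C = Ideal.span {e'} := by
  classical
  have hNpos : 0 < 2 * n := by omega
  haveI : NeZero (2 * n) := ⟨by omega⟩
  have h2 : (2 : F) ≠ 0 := by
    intro h
    apply hchar
    have h4 : ((4 * n : ℕ) : F) = (2:F) * (2:F) * (n:F) := by push_cast; ring
    rw [h4, h]; ring
  have hNF : ((2 * n : ℕ) : F) ≠ 0 := by
    intro h; apply hchar
    have h4 : ((4 * n : ℕ) : F) = 2 * ((2*n : ℕ) : F) := by push_cast; ring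
    rw [h4, h, mul_zero]
  have hu0 : u ≠ 0 := by
    intro h
    rw [h, zero_pow two_ne_zero] at hu
    exact one_ne_zero (neg_eq_zero.mp hu.symm)
  -- basic group facts
  have hx2n : x ^ (2*n) = 1 := by
    rw [hx, ← map_pow, QuaternionGroup.a_one_pow_n, map_one]
  have hxi : ∀ i : ℕ, x ^ i =
      MonoidAlgebra.of F (QuaternionGroup n) (QuaternionGroup.a (i : ZMod (2*n))) := by
    intro i; rw [hx, ← map_pow, QuaternionGroup.a_one_pow]
  have hofa : ∀ i : ZMod (2*n),
      MonoidAlgebra.of F (QuaternionGroup n) (QuaternionGroup.a i) = x ^ i.val := by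
    intro i; rw [hxi i.val, ZMod.natCast_val, ZMod.cast_id]
  have hyxi : ∀ i : ℕ, y * x ^ i =
      MonoidAlgebra.of F (QuaternionGroup n) (QuaternionGroup.xa (i : ZMod (2*n))) := by
    intro i; rw [hy, hxi i, ← map_mul, QuaternionGroup.xa_mul_a, zero_add]
  -- the sums S and T
  set S : MonoidAlgebra F (QuaternionGroup n) :=
    ∑ i ∈ Finset.range (2*n), ((-1 : F) ^ i) • x ^ i with hS
  set T : MonoidAlgebra F (QuaternionGroup n) :=
    ∑ i ∈ Finset.range (2*n), ((-1 : F) ^ i) • (x ^ (2*n-1)) ^ i with hT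
  have he'S : e' = ((2 * n : ℕ) : F)⁻¹ • S := he'
  have hx'2n : (x ^ (2*n-1)) ^ (2*n) = 1 := by
    rw [← pow_mul, mul_comm, pow_mul, hx2n, one_pow]
  have hxx' : x * x ^ (2*n-1) = 1 := by
    rw [← pow_succ', show 2*n-1+1 = 2*n from by omega, hx2n]
  have hx_eq : x = (x ^ (2*n-1)) ^ (2*n-1) := by
    have h5 : (x^(2*n-1))^(2*n) = x^(2*n-1) * (x^(2*n-1))^(2*n-1) := by
      rw [← pow_succ', show 2*n-1+1 = 2*n from by omega]
    calc x = x * (x^(2*n-1))^(2*n) := by rw [hx'2n, mul_one]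
      _ = (x * x^(2*n-1)) * (x^(2*n-1))^(2*n-1) := by rw [h5, mul_assoc]
      _ = (x^(2*n-1))^(2*n-1) := by rw [hxx', one_mul]
  -- shift lemma
  have shift : ∀ w : MonoidAlgebra F (QuaternionGroup n), w ^ (2*n) = 1 →
      w * (∑ i ∈ Finset.range (2*n), ((-1:F)^i) • w^i) =
        -(∑ i ∈ Finset.range (2*n), ((-1:F)^i) • w^i) := by
    intro w hw
    have hterm : ∀ i : ℕ, w * ((-1:F)^i • w^i) = -((-1:F)^(i+1) • w^(i+1)) := by
      intro i
      rw [mul_smul_comm, ← pow_succ', pow_succ (-1:F) i, mul_neg_one, neg_smul, neg_neg]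
    have h1 := Finset.sum_range_succ' (fun j => ((-1:F)^j) • w^j) (2*n)
    have h2 := Finset.sum_range_succ (fun j => ((-1:F)^j) • w^j) (2*n)
    have h3 : ((-1:F)^(2*n)) • w^(2*n) = ((-1:F)^0) • w^0 := by
      rw [hw, Even.neg_one_pow (even_two_mul n), pow_zero, pow_zero]
    rw [Finset.mul_sum]
    simp only [hterm]
    rw [Finset.sum_neg_distrib, neg_inj]
    have h4 := h1.symm.trans h2
    rw [h3] at h4
    exact add_right_cancel h4
  have hxS : x * S = -S := shift x hx2n
  have hx'T : x ^ (2*n-1) * T = -T := shift _ hx'2n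
  -- iterated
  have hpow : ∀ (w W : MonoidAlgebra F (QuaternionGroup n)), w * W = -W →
      ∀ k : ℕ, w ^ k * W = ((-1:F)^k) • W := by
    intro w W hw k
    induction k with
    | zero => simp
    | succ k ih =>
      rw [pow_succ', mul_assoc, ih, mul_smul_comm, hw, smul_neg,
        pow_succ (-1:F) k, mul_neg_one, neg_smul]
  have hpow' : ∀ (w W : MonoidAlgebra F (QuaternionGroup n)), W * w = -W →
      ∀ k : ℕ, W * w ^ k = ((-1:F)^k) • W := by
    intro w W hw k
    induction k with
    | zero => simp
    | succ k ih =>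
      rw [pow_succ w k, ← mul_assoc, ih, smul_mul_assoc, hw, smul_neg,
        pow_succ (-1:F) k, mul_neg_one, neg_smul]
  have hodd2n1 : Odd (2*n-1) := ⟨n-1, by omega⟩
  have hxT : x * T = -T := by
    rw [hx_eq, hpow _ _ hx'T, hodd2n1.neg_one_pow, neg_one_smul]
  have hx'S : x ^ (2*n-1) * S = -S := by
    rw [hpow _ _ hxS, hodd2n1.neg_one_pow, neg_one_smul]
  have hneg1sq : ∀ i : ℕ, (-1:F)^i * (-1:F)^i = 1 := by
    intro i; rw [← pow_add]; exact Even.neg_one_pow ⟨i, rfl⟩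
  -- S * T = 2n • T etc.
  have hST : S * T = (2*n : ℕ) • T := by
    rw [hS, Finset.sum_mul]
    calc ∑ i ∈ Finset.range (2*n), (((-1:F)^i) • x^i) * T
        = ∑ _i ∈ Finset.range (2*n), T := by
          refine Finset.sum_congr rfl fun i _ => ?_
          rw [smul_mul_assoc, hpow x T hxT i, smul_smul, hneg1sq i, one_smul]
      _ = (2*n : ℕ) • T := by rw [Finset.sum_const, Finset.card_range]
  have hTS : T * S = (2*n : ℕ) • S := by
    rw [hT, Finset.sum_mul]
    calc ∑ i ∈ Finset.range (2*n), (((-1:F)^i) • (x^(2*n-1))^i) * S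
        = ∑ _i ∈ Finset.range (2*n), S := by
          refine Finset.sum_congr rfl fun i _ => ?_
          rw [smul_mul_assoc, hpow _ S hx'S i, smul_smul, hneg1sq i, one_smul]
      _ = (2*n : ℕ) • S := by rw [Finset.sum_const, Finset.card_range]
  have hcommST : S * T = T * S := by
    rw [hS, hT, Finset.sum_mul, Finset.mul_sum]
    refine Finset.sum_congr rfl fun i _ => ?_
    rw [smul_mul_assoc, mul_smul_comm]
    congr 1
    rw [Finset.mul_sum, Finset.sum_mul]
    refine Finset.sum_congr rfl fun j _ => ?_
    rw [mul_smul_comm, smul_mul_assoc]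
    congr 1
    rw [← pow_mul, ← pow_add, ← pow_add, Nat.add_comm]
  have hTSeq : T = S := by
    have h6 : (2*n : ℕ) • T = (2*n : ℕ) • S := by rw [← hST, hcommST, hTS]
    rw [← Nat.cast_smul_eq_nsmul F, ← Nat.cast_smul_eq_nsmul F] at h6
    exact smul_right_injective _ hNF h6
  -- y commutes with S
  have hySy : y * S = S * y := by
    have h7 : y * S = T * y := by
      rw [hS, hT, Finset.mul_sum, Finset.sum_mul]
      refine Finset.sum_congr rfl fun i _ => ?_
      rw [mul_smul_comm, smul_mul_assoc, hyxi i]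
      congr 1
      rw [← pow_mul, hxi ((2*n-1)*i), hy, ← map_mul, QuaternionGroup.a_mul_xa]
      congr 1
      have h8 : (((2*n-1)*i : ℕ) : ZMod (2*n)) + (i : ZMod (2*n)) = 0 := by
        rw [← Nat.cast_add, show (2*n-1)*i + i = 2*n*i from by
          rw [Nat.sub_mul, one_mul, Nat.sub_add_cancel (Nat.le_mul_of_pos_left i hNpos)],
          Nat.cast_mul, ZMod.natCast_self, zero_mul]
      rw [eq_neg_of_add_eq_zero_left h8, zero_sub, neg_neg]
    rw [h7, hTSeq]
  have hye' : y * e' = e' * y := by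
    rw [he'S, mul_smul_comm, smul_mul_assoc, hySy]
  -- x acting on e'
  have hcommxS : x * S = S * x := by
    rw [hS, Finset.mul_sum, Finset.sum_mul]
    refine Finset.sum_congr rfl fun i _ => ?_
    rw [mul_smul_comm, smul_mul_assoc, ← pow_succ', ← pow_succ]
  have hxe' : x * e' = -e' := by
    rw [he'S, mul_smul_comm, hxS, smul_neg]
  have he'x : e' * x = -e' := by
    rw [he'S, smul_mul_assoc, ← hcommxS, hxS, smul_neg]
  -- e' is idempotent
  have hSe' : S * e' = ((2*n : ℕ) : F) • e' := by
    rw [hS, Finset.sum_mul]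
    calc ∑ i ∈ Finset.range (2*n), (((-1:F)^i) • x^i) * e'
        = ∑ _i ∈ Finset.range (2*n), e' := by
          refine Finset.sum_congr rfl fun i _ => ?_
          rw [smul_mul_assoc, hpow x e' hxe' i, smul_smul, hneg1sq i, one_smul]
      _ = ((2*n : ℕ) : F) • e' := by
          rw [Finset.sum_const, Finset.card_range, Nat.cast_smul_eq_nsmul]
  have he'e' : e' * e' = e' := by
    nth_rewrite 1 [he'S]
    rw [smul_mul_assoc, hSe', smul_smul, inv_mul_cancel₀ hNF, one_smul]
  -- of (a i) and of (xa i) acting on e'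
  have hofxa : ∀ i : ZMod (2*n),
      MonoidAlgebra.of F (QuaternionGroup n) (QuaternionGroup.xa i) =
        y * MonoidAlgebra.of F (QuaternionGroup n) (QuaternionGroup.a i) := by
    intro i; rw [hy, ← map_mul, QuaternionGroup.xa_mul_a, zero_add]
  -- centrality
  have hcen : ∀ z : MonoidAlgebra F (QuaternionGroup n), e' * z = z * e' := by
    intro z
    refine MonoidAlgebra.induction_on (motive := fun w => e' * w = w * e') z
      (fun g => ?_) (fun f g hf hg => ?_) (fun r f hf => ?_)
    · cases g with
      | a i =>
        show e' * _ = _ * e'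
        rw [hofa, hpow' x e' he'x, hpow x e' hxe']
      | xa i =>
        show e' * _ = _ * e'
        rw [hofxa, ← mul_assoc, ← hye', mul_assoc, mul_assoc, hofa,
          hpow' x e' he'x, hpow x e' hxe', mul_smul_comm]
    · have hf' : e' * f = f * e' := hf
      have hg' : e' * g = g * e' := hg
      show e' * (f + g) = (f + g) * e'
      rw [mul_add, add_mul, hf', hg']
    · have hf' : e' * f = f * e' := hf
      show e' * (r • f) = (r • f) * e'
      rw [mul_smul_comm, smul_mul_assoc, hf']
  -- y * y * e'
  have hyy : y * y =
      MonoidAlgebra.of F (QuaternionGroup n) (QuaternionGroup.a (n : ZMod (2*n))) := by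
    rw [hy, ← map_mul, QuaternionGroup.xa_mul_xa]
    norm_num
  have hyf : y * (y * e') = -e' := by
    rw [← mul_assoc, hyy, hofa, hpow x e' hxe',
      ZMod.val_cast_of_lt (show n < 2*n by omega), hno.neg_one_pow, neg_one_smul]
  have he'f : e' * (y * e') = y * e' := by
    rw [← mul_assoc, ← hye', mul_assoc, he'e']
  have hfe' : (y * e') * e' = y * e' := by rw [mul_assoc, he'e']
  have hff : (y * e') * (y * e') = -e' := by
    calc (y*e')*(y*e') = y*((e'*y)*e') := by rw [mul_assoc, mul_assoc]
      _ = y*((y*e')*e') := by rw [← hye']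
      _ = y*(y*e') := by rw [mul_assoc, he'e']
      _ = -e' := hyf
  -- decomposition of z * e'
  have hstruct : ∀ z : MonoidAlgebra F (QuaternionGroup n),
      ∃ α β : F, z * e' = α • e' + β • (y * e') := by
    intro z
    refine MonoidAlgebra.induction_on
      (motive := fun w => ∃ α β : F, w * e' = α • e' + β • (y * e')) z (fun g => ?_) ?_ ?_
    · cases g with
      | a i =>
        exact ⟨(-1:F)^(i.val), 0, by
          rw [hofa, hpow x e' hxe', zero_smul, add_zero]⟩
      | xa i =>
        refine ⟨0, (-1:F)^(i.val), ?_⟩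
        rw [hofxa, mul_assoc, hofa, hpow x e' hxe', zero_smul, zero_add, mul_smul_comm]
    · rintro f g ⟨α, β, hf⟩ ⟨γ, δ, hg⟩
      refine ⟨α + γ, β + δ, ?_⟩
      rw [add_mul, hf, hg, add_smul, add_smul]
      abel
    · rintro r f ⟨α, β, hf⟩
      refine ⟨r * α, r * β, ?_⟩
      rw [smul_mul_assoc, hf, smul_add, smul_smul, smul_smul]
  -- idempotents
  have hv2p : (e' + u • (y * e')) * (e' + u • (y * e')) = (2:F) • (e' + u • (y * e')) := by
    rw [mul_add, add_mul, add_mul, mul_smul_comm, smul_mul_assoc, smul_mul_assoc,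
      he'e', he'f, hfe', mul_smul_comm, hff]
    match_scalars
    · linear_combination (-1:F) * hu
    · ring
  have hv2m : (e' - u • (y * e')) * (e' - u • (y * e')) = (2:F) • (e' - u • (y * e')) := by
    rw [mul_sub, sub_mul, sub_mul, mul_smul_comm, smul_mul_assoc, smul_mul_assoc,
      he'e', he'f, hfe', mul_smul_comm, hff]
    match_scalars
    · linear_combination (-1:F) * hu
    · ring
  have hidemp : ((2 : F)⁻¹ • (e' + u • (y * e'))) * ((2 : F)⁻¹ • (e' + u • (y * e'))) =
      (2 : F)⁻¹ • (e' + u • (y * e')) := by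
    rw [smul_mul_assoc, mul_smul_comm, hv2p, smul_smul, smul_smul,
      show (2:F)⁻¹ * (2:F)⁻¹ * 2 = (2:F)⁻¹ by field_simp]
  have hidemm : ((2 : F)⁻¹ • (e' - u • (y * e'))) * ((2 : F)⁻¹ • (e' - u • (y * e'))) =
      (2 : F)⁻¹ • (e' - u • (y * e')) := by
    rw [smul_mul_assoc, mul_smul_comm, hv2m, smul_smul, smul_smul,
      show (2:F)⁻¹ * (2:F)⁻¹ * 2 = (2:F)⁻¹ by field_simp]
  -- evaluation at a 0
  have hSa0 : S.coeff (QuaternionGroup.a 0) = 1 := by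
    rw [hS, MonoidAlgebra.coeff_sum, Finset.sum_apply',
        Finset.sum_eq_single 0 ?_ (fun h => absurd (Finset.mem_range.2 hNpos) h)]
    · rw [MonoidAlgebra.coeff_smul_apply, hxi 0, pow_zero, one_smul, MonoidAlgebra.of_apply,
        MonoidAlgebra.coeff_single, Finsupp.single_apply, if_pos (by norm_num)]
    · intro i hi hne
      rw [MonoidAlgebra.coeff_smul_apply, hxi i, MonoidAlgebra.of_apply, MonoidAlgebra.coeff_single,
        Finsupp.single_apply,
        if_neg, smul_zero]
      intro h
      apply hne
      have h2' : (i : ZMod (2*n)) = 0 := QuaternionGroup.a.inj h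
      have h3' := ZMod.val_cast_of_lt (Finset.mem_range.1 hi)
      rw [h2', ZMod.val_zero] at h3'
      omega
  have he'a0 : e'.coeff (QuaternionGroup.a 0) = ((2*n : ℕ) : F)⁻¹ := by
    rw [he'S, MonoidAlgebra.coeff_smul_apply, hSa0, smul_eq_mul, mul_one]
  have hfa0 : (y * e').coeff (QuaternionGroup.a 0) = 0 := by
    have h1 : y * S = ∑ i ∈ Finset.range (2*n),
        ((-1:F)^i) • MonoidAlgebra.of F (QuaternionGroup n)
          (QuaternionGroup.xa (i : ZMod (2*n))) := by
      rw [hS, Finset.mul_sum]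
      exact Finset.sum_congr rfl fun i _ => by rw [mul_smul_comm, hyxi]
    rw [he'S, mul_smul_comm, h1, MonoidAlgebra.coeff_smul_apply, MonoidAlgebra.coeff_sum,
      Finset.sum_apply',
      Finset.sum_eq_zero, smul_zero]
    intro i _
    rw [MonoidAlgebra.coeff_smul_apply, MonoidAlgebra.of_apply, MonoidAlgebra.coeff_single,
      Finsupp.single_apply, if_neg (fun h => by cases h), smul_zero]
  have hvpne : e' + u • (y * e') ≠ 0 := by
    intro h
    have h1 : (e' + u • (y * e')).coeff (QuaternionGroup.a 0) = ((2*n : ℕ) : F)⁻¹ := by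
      rw [MonoidAlgebra.coeff_add, Finsupp.add_apply, MonoidAlgebra.coeff_smul_apply, he'a0, hfa0, smul_zero, add_zero]
    rw [h] at h1
    exact inv_ne_zero hNF (by rw [← h1]; rfl)
  have hvmne : e' - u • (y * e') ≠ 0 := by
    intro h
    have h1 : (e' - u • (y * e')).coeff (QuaternionGroup.a 0) = ((2*n : ℕ) : F)⁻¹ := by
      rw [MonoidAlgebra.coeff_sub, Finsupp.sub_apply, MonoidAlgebra.coeff_smul_apply, he'a0, hfa0, smul_zero, sub_zero]
    rw [h] at h1
    exact inv_ne_zero hNF (by rw [← h1]; rfl)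
  have h2e : (2:F)⁻¹ • ((e' + u • (y * e')) + (e' - u • (y * e'))) = e' := by
    rw [show (e' + u • (y * e')) + (e' - u • (y * e')) = (2:F) • e' by module,
      smul_smul, inv_mul_cancel₀ h2, one_smul]
  refine ⟨he'e', hcen, hidemp, hidemm,
    finrank_span_singleton hvpne, finrank_span_singleton hvmne, ?_⟩
  -- classification of ideals
  intro C hC
  by_cases he'C : e' ∈ C
  · right; right; right
    exact le_antisymm hC (by rwa [Ideal.span_le, Set.singleton_subset_iff])
  have hdec : ∀ c ∈ C, ∃ α β : F, c = α • e' + β • (y * e') := by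
    intro c hc
    obtain ⟨z, hz⟩ := Submodule.mem_span_singleton.1 (hC hc)
    obtain ⟨α, β, h⟩ := hstruct z
    exact ⟨α, β, by rw [← hz, smul_eq_mul, h]⟩
  have hmem : ∀ (r : F) (z : MonoidAlgebra F (QuaternionGroup n)), z ∈ C → r • z ∈ C := by
    intro r z hz
    have h1 : r • z = (r • (1 : MonoidAlgebra F (QuaternionGroup n))) * z := by
      rw [smul_mul_assoc, one_mul]
    rw [h1]
    exact Ideal.mul_mem_left C _ hz
  have hproj : ∀ c ∈ C, ∀ α β : F, c = α • e' + β • (y * e') →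
      ((α - u*β) • (e' + u • (y * e')) ∈ C ∧ (α + u*β) • (e' - u • (y * e')) ∈ C ∧
        c = ((2:F)⁻¹*(α - u*β)) • (e' + u • (y * e')) +
            ((2:F)⁻¹*(α + u*β)) • (e' - u • (y * e'))) := by
    intro c hc α β hd
    have hyc : y * c ∈ C := Ideal.mul_mem_left C y hc
    have hycd : y * c = α • (y * e') - β • e' := by
      rw [hd, mul_add, mul_smul_comm, mul_smul_comm, hyf]
      module
    refine ⟨?_, ?_, ?_⟩
    · have h1 : (α - u*β) • (e' + u • (y * e')) = c + u • (y * c) := by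
        rw [hycd, hd]
        match_scalars
        · ring1
        · linear_combination (-β : F) * hu
      rw [h1]
      exact C.add_mem hc (hmem u _ hyc)
    · have h1 : (α + u*β) • (e' - u • (y * e')) = c - u • (y * c) := by
        rw [hycd, hd]
        match_scalars
        · ring1
        · linear_combination (-β : F) * hu
      rw [h1]
      exact C.sub_mem hc (hmem u _ hyc)
    · rw [hd]
      match_scalars
      all_goals field_simp
      all_goals first
        | ring1
        | linear_combination (β : F) * hu
        | linear_combination (-β : F) * hu
        | linear_combination ((2:F)*β) * hu
        | linear_combination (-(2:F)*β) * hu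
        | linear_combination ((4:F)*β) * hu
        | linear_combination (-(4:F)*β) * hu
  by_cases hP : ∃ c ∈ C, ∃ α β : F, (c = α • e' + β • (y * e')) ∧ α - u*β ≠ 0
  · obtain ⟨c, hc, α, β, hd, hne⟩ := hP
    have hvpC : e' + u • (y * e') ∈ C := by
      have h1 := (hproj c hc α β hd).1
      have h3 := hmem (α - u*β)⁻¹ _ h1
      rwa [smul_smul, inv_mul_cancel₀ hne, one_smul] at h3
    right; left
    apply le_antisymm
    · intro z hz
      rw [Submodule.restrictScalars_mem] at hz
      obtain ⟨γ, δ, hzd⟩ := hdec z hz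
      have hz2 : γ + u*δ = 0 := by
        by_contra hne2
        apply he'C
        have hvmC : e' - u • (y * e') ∈ C := by
          have h1 := (hproj z hz γ δ hzd).2.1
          have h3 := hmem (γ + u*δ)⁻¹ _ h1
          rwa [smul_smul, inv_mul_cancel₀ hne2, one_smul] at h3
        have h4 := hmem ((2:F)⁻¹) _ (C.add_mem hvpC hvmC)
        rwa [h2e] at h4
      have h3 := (hproj z hz γ δ hzd).2.2
      rw [hz2, mul_zero, zero_smul, add_zero] at h3
      exact Submodule.mem_span_singleton.2 ⟨(2:F)⁻¹*(γ - u*δ), h3.symm⟩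
    · rw [Submodule.span_le, Set.singleton_subset_iff]
      exact hvpC
  · by_cases hQ : ∃ c ∈ C, ∃ α β : F, (c = α • e' + β • (y * e')) ∧ α + u*β ≠ 0
    · obtain ⟨c, hc, α, β, hd, hne⟩ := hQ
      have hvmC : e' - u • (y * e') ∈ C := by
        have h1 := (hproj c hc α β hd).2.1
        have h3 := hmem (α + u*β)⁻¹ _ h1
        rwa [smul_smul, inv_mul_cancel₀ hne, one_smul] at h3
      right; right; left
      apply le_antisymm
      · intro z hz
        rw [Submodule.restrictScalars_mem] at hz
        obtain ⟨γ, δ, hzd⟩ := hdec z hz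
        have hz1 : γ - u*δ = 0 := by
          by_contra hne1
          exact hP ⟨z, hz, γ, δ, hzd, hne1⟩
        have h3 := (hproj z hz γ δ hzd).2.2
        rw [hz1, mul_zero, zero_smul, zero_add] at h3
        exact Submodule.mem_span_singleton.2 ⟨(2:F)⁻¹*(γ + u*δ), h3.symm⟩
      · rw [Submodule.span_le, Set.singleton_subset_iff]
        exact hvmC
    · left
      rw [eq_bot_iff]
      intro c hc
      obtain ⟨α, β, hd⟩ := hdec c hc
      have h1 : α - u*β = 0 := by
        by_contra hne1
        exact hP ⟨c, hc, α, β, hd, hne1⟩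
      have h2' : α + u*β = 0 := by
        by_contra hne2
        exact hQ ⟨c, hc, α, β, hd, hne2⟩
      have hα : α = 0 := by
        have : (2:F) * α = 0 := by linear_combination h1 + h2'
        rcases mul_eq_zero.1 this with h | h
        · exact absurd h h2
        · exact h
      have hβ : β = 0 := by
        have h5 : u * ((2:F) * β) = 0 := by linear_combination h2' - h1
        rcases mul_eq_zero.1 h5 with h | h
        · exact absurd h hu0
        · rcases mul_eq_zero.1 h with h' | h'
          · exact absurd h' h2
          · exact h'
      rw [Submodule.mem_bot, hd, hα, hβ, zero_smul, zero_smul, add_zero]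
end

section
/- Assume n is odd and that −1 is not a square in F, and let e' = (2n)^{−1}·∑_{i=0}^{2n−1} (−1)^i x^i ∈ F[Q_{4n}]. Then e' is a central idempotent of F[Q_{4n}] and the only left ideals of F[Q_{4n}] contained in F[Q_{4n}]·e' are 0 and F[Q_{4n}]·e' itself. -/
open Finset MonoidAlgebra QuaternionGroup

theorem stmt_15 {F : Type*} [Field F] {n : ℕ} (hn : 1 ≤ n) (hno : Odd n)
    (hchar : ((4 * n : ℕ) : F) ≠ 0)
    (hu : ∀ u : F, u ^ 2 ≠ -1)
    (x y e' : MonoidAlgebra F (QuaternionGroup n))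
    (hx : x = MonoidAlgebra.of F (QuaternionGroup n) (QuaternionGroup.a 1))
    (hy : y = MonoidAlgebra.of F (QuaternionGroup n) (QuaternionGroup.xa 0))
    (he' : e' = ((2 * n : ℕ) : F)⁻¹ •
      ∑ i ∈ Finset.range (2 * n), ((-1 : F) ^ i) • x ^ i) :
    e' * e' = e' ∧ (∀ z, e' * z = z * e') ∧
    ∀ C : Ideal (MonoidAlgebra F (QuaternionGroup n)), C ≤ Ideal.span {e'} →
      C = ⊥ ∨ C = Ideal.span {e'} := by
  haveI : NeZero (2 * n) := ⟨by omega⟩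
  set c : F := ((2 * n : ℕ) : F)⁻¹ with hc
  set S : MonoidAlgebra F (QuaternionGroup n) :=
    ∑ i ∈ Finset.range (2 * n), ((-1 : F) ^ i) • x ^ i with hS
  have h2n : ((2 * n : ℕ) : F) ≠ 0 := by
    intro h
    apply hchar
    have h4 : (4 * n : ℕ) = 2 * (2 * n) := by ring
    rw [h4, Nat.cast_mul, h, mul_zero]
  -- basic facts about powers of x
  have hxpow : ∀ k : ℕ, x ^ k
      = MonoidAlgebra.of F (QuaternionGroup n) (QuaternionGroup.a (k : ZMod (2 * n))) := by
    intro k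
    rw [hx, ← map_pow, QuaternionGroup.a_one_pow]
  have hxN : x ^ (2 * n) = 1 := by
    rw [hxpow, ZMod.natCast_self, ← QuaternionGroup.one_def, map_one]
  -- the shift lemma
  have L1 : ∑ i ∈ Finset.range (2 * n), ((-1 : F) ^ (i + 1)) • x ^ (i + 1) = S := by
    have hend : ((-1 : F) ^ (2 * n)) • x ^ (2 * n) = ((-1 : F) ^ 0) • x ^ 0 := by
      rw [hxN, Even.neg_one_pow (even_two_mul n)]
      simp
    have h1 := Finset.sum_range_succ' (fun i => ((-1 : F) ^ i) • x ^ i) (2 * n)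
    have h2 := Finset.sum_range_succ (fun i => ((-1 : F) ^ i) • x ^ i) (2 * n)
    rw [h2] at h1
    rw [hS]
    rw [hend] at h1
    linear_combination (norm := abel) h1.symm
  -- x * S = -S and S * x = -S
  have hmid : ∑ i ∈ Finset.range (2 * n), ((-1 : F) ^ i) • x ^ (i + 1) = -S := by
    have step : ∑ i ∈ Finset.range (2 * n), ((-1 : F) ^ i) • x ^ (i + 1)
        = -∑ i ∈ Finset.range (2 * n), ((-1 : F) ^ (i + 1)) • x ^ (i + 1) := by
      rw [← Finset.sum_neg_distrib]
      apply Finset.sum_congr rfl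
      intro i _
      rw [pow_succ (-1 : F) i, mul_neg_one, neg_smul, neg_neg]
    rw [step, L1]
  have hxS : x * S = -S := by
    rw [hS, Finset.mul_sum]
    rw [← hmid]
    apply Finset.sum_congr rfl
    intro i _
    rw [mul_smul_comm, ← pow_succ']
  have hSx : S * x = -S := by
    rw [hS, Finset.sum_mul]
    rw [← hmid]
    apply Finset.sum_congr rfl
    intro i _
    rw [smul_mul_assoc, ← pow_succ]
  have hxkS : ∀ k : ℕ, x ^ k * S = ((-1 : F) ^ k) • S := by
    intro k
    induction k with
    | zero => simp
    | succ k ih =>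
      rw [pow_succ, mul_assoc, hxS, mul_neg, ih, pow_succ, mul_neg_one, neg_smul]
  have hSxk : ∀ k : ℕ, S * x ^ k = ((-1 : F) ^ k) • S := by
    intro k
    induction k with
    | zero => simp
    | succ k ih =>
      rw [pow_succ, ← mul_assoc, ih, smul_mul_assoc, hSx, smul_neg, pow_succ,
        mul_neg_one, neg_smul]
  -- y commutes with S
  have hyx : ∀ i : ℕ, i < 2 * n → y * x ^ i = x ^ (2 * n - i) * y := by
    intro i hi
    rw [hxpow, hxpow, hy, ← map_mul, ← map_mul]
    congr 1
    rw [QuaternionGroup.xa_mul_a, QuaternionGroup.a_mul_xa]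
    congr 1
    have : ((2 * n - i : ℕ) : ZMod (2 * n)) = -(i : ZMod (2 * n)) := by
      rw [Nat.cast_sub hi.le, ZMod.natCast_self, zero_sub]
    rw [this]
    ring
  have hyS : y * S = S * y := by
    have step1 : y * S = (∑ i ∈ Finset.range (2 * n), ((-1 : F) ^ i) • x ^ (2 * n - i)) * y := by
      rw [hS, Finset.mul_sum, Finset.sum_mul]
      apply Finset.sum_congr rfl
      intro i hi
      rw [mul_smul_comm, hyx i (Finset.mem_range.mp hi), smul_mul_assoc]
    have step2 : (∑ i ∈ Finset.range (2 * n), ((-1 : F) ^ i) • x ^ (2 * n - i)) = S := by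
      rw [← Finset.sum_range_reflect (fun j => ((-1 : F) ^ j) • x ^ (2 * n - j)) (2 * n)]
      rw [← L1]
      apply Finset.sum_congr rfl
      intro j hj
      have hj' : j < 2 * n := Finset.mem_range.mp hj
      have harith : 2 * n - (2 * n - 1 - j) = j + 1 := by omega
      have hpar : (2 * n - 1 - j) % 2 = (j + 1) % 2 := by omega
      rw [harith, neg_one_pow_eq_pow_mod_two, hpar, ← neg_one_pow_eq_pow_mod_two]
    rw [step1, step2]
  -- transfer to e'
  have he'c : e' = c • S := he'
  have hxke : ∀ k : ℕ, x ^ k * e' = ((-1 : F) ^ k) • e' := by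
    intro k
    rw [he'c, mul_smul_comm, hxkS, smul_comm]
  have hexk : ∀ k : ℕ, e' * x ^ k = ((-1 : F) ^ k) • e' := by
    intro k
    rw [he'c, smul_mul_assoc, hSxk, smul_comm]
  have hye : y * e' = e' * y := by
    rw [he'c, mul_smul_comm, smul_mul_assoc, hyS]
  -- idempotency
  have hidem : e' * e' = e' := by
    have hSS : S * S = ((2 * n : ℕ) : F) • S := by
      nth_rewrite 1 [hS]
      rw [Finset.sum_mul]
      have : ∀ i ∈ Finset.range (2 * n), (((-1 : F) ^ i) • x ^ i) * S = S := by
        intro i _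
        rw [smul_mul_assoc, hxkS, smul_smul, ← pow_add, Even.neg_one_pow ⟨i, by ring⟩, one_smul]
      rw [Finset.sum_congr rfl this, Finset.sum_const, Finset.card_range,
        ← Nat.cast_smul_eq_nsmul F]
    rw [he'c, smul_mul_assoc, mul_smul_comm, hSS, smul_smul, smul_smul]
    congr 1
    rw [hc]
    field_simp
  -- the group elements in terms of x and y
  have hofa : ∀ i : ZMod (2 * n),
      MonoidAlgebra.of F (QuaternionGroup n) (QuaternionGroup.a i) = x ^ i.val := by
    intro i
    rw [hxpow, ZMod.natCast_val, ZMod.cast_id]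
  have hofxa : ∀ i : ZMod (2 * n),
      MonoidAlgebra.of F (QuaternionGroup n) (QuaternionGroup.xa i) = y * x ^ i.val := by
    intro i
    rw [hxpow i.val, hy, ← map_mul]
    congr 1
    rw [QuaternionGroup.xa_mul_a, zero_add, ZMod.natCast_val, ZMod.cast_id]
  -- centrality
  have hcomm : ∀ z, e' * z = z * e' := by
    intro z
    induction z using MonoidAlgebra.induction_on with
    | of g =>
      rcases g with i | i
      · rw [hofa, hexk, hxke]
      · rw [hofxa, ← mul_assoc, ← hye, mul_assoc, hexk, mul_smul_comm, mul_assoc, hxke,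
          mul_smul_comm]
    | add f g hf hg => rw [mul_add, add_mul, hf, hg]
    | smul r f hf => rw [mul_smul_comm, smul_mul_assoc, hf]
  refine ⟨hidem, hcomm, ?_⟩
  -- y * (y * e') = -e'
  have hy2 : y * y = x ^ n := by
    rw [hy, ← map_mul, QuaternionGroup.xa_mul_xa, hxpow]
    congr 1
    simp
  have hy2e : y * (y * e') = -e' := by
    rw [← mul_assoc, hy2, hxke, Odd.neg_one_pow hno, neg_smul, one_smul]
  -- representation lemma
  have hrep : ∀ r : MonoidAlgebra F (QuaternionGroup n),
      ∃ α β : F, r * e' = α • e' + β • (y * e') := by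
    intro r
    induction r using MonoidAlgebra.induction_on with
    | of g =>
      rcases g with i | i
      · exact ⟨(-1 : F) ^ i.val, 0, by rw [hofa, hxke, zero_smul, add_zero]⟩
      · refine ⟨0, (-1 : F) ^ i.val, ?_⟩
        rw [hofxa, mul_assoc, hxke, mul_smul_comm, zero_smul, zero_add]
    | add f g hf hg =>
      obtain ⟨α₁, β₁, h₁⟩ := hf
      obtain ⟨α₂, β₂, h₂⟩ := hg
      refine ⟨α₁ + α₂, β₁ + β₂, ?_⟩
      rw [add_mul, h₁, h₂, add_smul, add_smul]
      abel
    | smul r f hf =>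
      obtain ⟨α, β, h⟩ := hf
      exact ⟨r * α, r * β, by rw [smul_mul_assoc, h, smul_add, smul_smul, smul_smul]⟩
  -- minimality
  intro C hC
  by_cases hbot : C = ⊥
  · exact Or.inl hbot
  right
  obtain ⟨z, hzC, hz0⟩ := Submodule.ne_bot_iff C |>.mp hbot
  have hzspan : z ∈ Ideal.span {e'} := hC hzC
  rw [Ideal.span, Submodule.mem_span_singleton] at hzspan
  obtain ⟨r, hr⟩ := hzspan
  rw [smul_eq_mul] at hr
  obtain ⟨α, β, hαβ⟩ := hrep r
  have hz : z = α • e' + β • (y * e') := by rw [← hr, hαβ]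
  have hne : ¬(α = 0 ∧ β = 0) := by
    rintro ⟨h1, h2⟩
    apply hz0
    rw [hz, h1, h2, zero_smul, zero_smul, add_zero]
  have hd : α ^ 2 + β ^ 2 ≠ 0 := by
    intro h
    by_cases hβ : β = 0
    · apply hne
      refine ⟨?_, hβ⟩
      have : α ^ 2 = 0 := by rw [hβ] at h; simpa using h
      exact pow_eq_zero_iff (by norm_num) |>.mp this
    · apply hu (α * β⁻¹)
      have hb2 : β ^ 2 ≠ 0 := pow_ne_zero 2 hβ
      rw [mul_pow, inv_pow, (show α ^ 2 = -β ^ 2 by linear_combination h), neg_mul,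
        mul_inv_cancel₀ hb2]
  have key : (α • (1 : MonoidAlgebra F (QuaternionGroup n)) - β • y) * z
      = (α ^ 2 + β ^ 2) • e' := by
    simp only [hz, sub_mul, mul_add, smul_mul_assoc, mul_smul_comm, one_mul, hy2e,
      smul_neg, smul_smul]
    module
  have hmem : e' ∈ C := by
    have h1 := C.smul_mem ((α ^ 2 + β ^ 2)⁻¹ • (α • (1 : MonoidAlgebra F (QuaternionGroup n))
      - β • y)) hzC
    rw [smul_eq_mul, smul_mul_assoc, key, smul_smul, inv_mul_cancel₀ hd, one_smul] at h1
    exact h1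
  exact le_antisymm hC (Ideal.span_le.mpr (Set.singleton_subset_iff.mpr hmem))
end

section
/- Let f be a self-reciprocal monic irreducible divisor of x^{2n} − 1 in F[x], let e_f ∈ F[x]/(x^{2n} − 1) be an idempotent generating the ideal generated by the image of (x^{2n} − 1)/f, and let π : F[x]/(x^{2n} − 1) → F[Q_{4n}] be the F-algebra homomorphism sending the class of x to the group element x. Then π(e_f) is a central idempotent of F[Q_{4n}] and dim_F (F[Q_{4n}]·π(e_f)) = 2·deg f. -/
open Polynomial

/-- A commutative ring has at most one idempotent generating a given ideal. -/
lemma idem_span_unique {R : Type*} [CommRing R] {e₁ e₂ : R}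
    (h1 : e₁ * e₁ = e₁) (h2 : e₂ * e₂ = e₂)
    (h : Ideal.span ({e₁} : Set R) = Ideal.span {e₂}) : e₁ = e₂ := by
  have m1 : e₁ ∈ Ideal.span ({e₂} : Set R) := by
    rw [← h]; exact Ideal.subset_span (Set.mem_singleton _)
  have m2 : e₂ ∈ Ideal.span ({e₁} : Set R) := by
    rw [h]; exact Ideal.subset_span (Set.mem_singleton _)
  obtain ⟨c, hc⟩ := Ideal.mem_span_singleton'.mp m1
  obtain ⟨d, hd⟩ := Ideal.mem_span_singleton'.mp m2
  have h12 : e₁ * e₂ = e₁ := by rw [← hc, mul_assoc, h2]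
  have h21 : e₂ * e₁ = e₂ := by rw [← hd, mul_assoc, h1]
  rw [← h12, mul_comm, h21]

set_option maxHeartbeats 2000000 in
set_option synthInstance.maxHeartbeats 400000 in
theorem stmt_16 {F : Type*} [Field F] {n : ℕ} (hn : 1 ≤ n)
    (hchar : ((4 * n : ℕ) : F) ≠ 0)
    (f : F[X]) (hmonic : f.Monic) (hirr : Irreducible f)
    (hdvd : f ∣ X ^ (2 * n) - 1) (hself : recip f = f)
    (e : Rq F (2 * n)) (hidem : e * e = e)
    (hgen : Ideal.span {e} = Ideal.span {mkq F (2 * n) ((X ^ (2 * n) - 1) /ₘ f)})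
    (π : Rq F (2 * n) →ₐ[F] MonoidAlgebra F (QuaternionGroup n))
    (hπ : π (mkq F (2 * n) X) =
      MonoidAlgebra.of F (QuaternionGroup n) (QuaternionGroup.a 1)) :
    π e * π e = π e ∧ (∀ z, π e * z = z * π e) ∧
    Module.finrank F ((Ideal.span {π e}).restrictScalars F) = 2 * f.natDegree := by
  classical
  haveI : NeZero n := ⟨by omega⟩
  haveI : NeZero (2 * n) := ⟨by omega⟩
  set q : F[X] := X ^ (2 * n) - 1 with hqdef
  set g : F[X] := q /ₘ f with hgdef
  revert e π
  change ∀ (e : AdjoinRoot q), e * e = e →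
    ∀ π : AdjoinRoot q →ₐ[F] MonoidAlgebra F (QuaternionGroup n),
    π (AdjoinRoot.root q) = MonoidAlgebra.of F (QuaternionGroup n) (QuaternionGroup.a 1) →
    Ideal.span {e} = Ideal.span {AdjoinRoot.mk q g} →
    π e * π e = π e ∧ (∀ z, π e * z = z * π e) ∧
    Module.finrank F ((Ideal.span {π e}).restrictScalars F) = 2 * f.natDegree
  intro e hidem π hπ hgen
  -- basic facts about q, f, g
  have hqdeg : q.natDegree = 2 * n := by
    rw [hqdef, ← C_1, natDegree_X_pow_sub_C]
  have hqmon : q.Monic := by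
    rw [hqdef, ← C_1]; exact monic_X_pow_sub_C (1 : F) (by omega)
  have hq0 : q ≠ 0 := hqmon.ne_zero
  have hfg : f * g = q := by
    have h1 := Polynomial.modByMonic_add_div q f
    have h2 : q %ₘ f = 0 := (Polynomial.modByMonic_eq_zero_iff_dvd hmonic).mpr hdvd
    rw [h2, zero_add] at h1
    exact h1
  have hf0 : f ≠ 0 := hmonic.ne_zero
  have hg0 : g ≠ 0 := by
    intro h; rw [h, mul_zero] at hfg; exact hq0 hfg.symm
  have hdegsum : f.natDegree + g.natDegree = 2 * n := by
    rw [← hqdeg, ← hfg, Polynomial.natDegree_mul hf0 hg0]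
  have hqc0 : q.coeff 0 = -1 := by
    rw [hqdef, coeff_sub, coeff_X_pow, coeff_one]
    simp only [if_neg (by omega : ¬ (0 : ℕ) = 2 * n)]
    norm_num
  have hcoeff0 : ∀ p : F[X], p ∣ q → p.coeff 0 ≠ 0 := by
    intro p hp h0
    have : X ∣ q := dvd_trans (Polynomial.X_dvd_iff.mpr h0) hp
    have := Polynomial.X_dvd_iff.mp this
    rw [hqc0] at this
    exact one_ne_zero (neg_eq_zero.mp this)
  have hfc0 : f.coeff 0 ≠ 0 := hcoeff0 f hdvd
  have hgc0 : g.coeff 0 ≠ 0 := hcoeff0 g (Dvd.intro_left f hfg)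
  -- reverse computations
  have hrevf : f.reverse = C (f.coeff 0) * f := by
    have h := hself
    rw [recip] at h
    calc f.reverse = C (f.coeff 0) * (C (f.coeff 0)⁻¹ * f.reverse) := by
          rw [← mul_assoc, ← C_mul, mul_inv_cancel₀ hfc0, C_1, one_mul]
      _ = C (f.coeff 0) * f := by rw [h]
  have hrevq : q.reverse = 1 - X ^ (2 * n) := by
    unfold Polynomial.reverse
    rw [hqdeg, hqdef, sub_eq_add_neg, ← C_1, ← C_neg, Polynomial.reflect_add,
      Polynomial.reflect_monomial, Polynomial.reflect_C,
      Polynomial.revAt_le (le_refl (2 * n)), tsub_self]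
    simp only [pow_zero, map_neg, C_1]
    ring
  have hrevg : g.reverse = C (-(f.coeff 0)⁻¹) * g := by
    have h1 : f.reverse * g.reverse = 1 - X ^ (2 * n) := by
      rw [← Polynomial.reverse_mul_of_domain, hfg, hrevq]
    have h2 : f * (C (f.coeff 0) * g.reverse) = f * (-g) := by
      calc f * (C (f.coeff 0) * g.reverse) = (C (f.coeff 0) * f) * g.reverse := by ring
        _ = f.reverse * g.reverse := by rw [hrevf]
        _ = 1 - X ^ (2 * n) := h1
        _ = -q := by rw [hqdef]; ring
        _ = f * (-g) := by rw [← hfg]; ring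
    have h3 := mul_left_cancel₀ hf0 h2
    have : g.reverse = C (f.coeff 0)⁻¹ * (-g) := by
      rw [← h3, ← mul_assoc, ← C_mul, inv_mul_cancel₀ hfc0, C_1, one_mul]
    rw [this]; ring_nf; rw [map_neg]; ring
  -- the root and its powers
  set r : AdjoinRoot q := AdjoinRoot.root q with hrdef
  have hrN : r ^ (2 * n) = 1 := by
    have h0 : AdjoinRoot.mk q (X ^ (2 * n) - 1) = 0 := AdjoinRoot.mk_self
    rw [map_sub, map_pow, map_one, AdjoinRoot.mk_X, sub_eq_zero] at h0
    exact h0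
  set ρ : AdjoinRoot q := r ^ (2 * n - 1) with hρdef
  have hρr : ρ * r = 1 := by
    rw [hρdef, ← pow_succ]
    have : 2 * n - 1 + 1 = 2 * n := by omega
    rw [this, hrN]
  have hrρ : r * ρ = 1 := by rw [mul_comm]; exact hρr
  have hρq : (Polynomial.aeval ρ) q = 0 := by
    show (Polynomial.aeval ρ) (X ^ (2 * n) - 1) = 0
    rw [map_sub, map_pow, aeval_X, map_one, hρdef, ← pow_mul,
      mul_comm (2 * n - 1) (2 * n), pow_mul, hrN, one_pow, sub_self]
  set σ : AdjoinRoot q →ₐ[F] AdjoinRoot q := AdjoinRoot.liftAlgHom q (Algebra.ofId F _) ρ hρq with hσdef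
  have hσr : σ r = ρ := by rw [hσdef]; exact AdjoinRoot.liftAlgHom_root q _ _ hρq
  -- σ (mk g) is a unit multiple of mk g, and conversely
  letI : Invertible ρ := ⟨r, hrρ, hρr⟩
  have hσg : σ (AdjoinRoot.mk q g) = (algebraMap F _ (-(f.coeff 0)⁻¹) * ρ ^ g.natDegree) *
      AdjoinRoot.mk q g := by
    have h1 : σ (AdjoinRoot.mk q g) = Polynomial.aeval ρ g := by
      rw [hσdef]; exact AdjoinRoot.liftAlgHom_mk q _ _ hρq g
    have h2 : Polynomial.aeval r g.reverse * ρ ^ g.natDegree = Polynomial.aeval ρ g := by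
      have h := Polynomial.eval₂_reverse_mul_pow (algebraMap F (AdjoinRoot q)) ρ g
      have hinv : (⅟ρ : AdjoinRoot q) = r := rfl
      rw [hinv] at h
      rw [Polynomial.aeval_def, Polynomial.aeval_def]
      exact h
    have h3 : Polynomial.aeval r g.reverse =
        algebraMap F _ (-(f.coeff 0)⁻¹) * AdjoinRoot.mk q g := by
      rw [AdjoinRoot.aeval_eq, hrevg, map_mul, AdjoinRoot.mk_C, ← AdjoinRoot.algebraMap_eq]
    rw [h1, ← h2, h3]; ring
  have hspanσg : Ideal.span {σ (AdjoinRoot.mk q g)} = Ideal.span {AdjoinRoot.mk q g} := by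
    apply le_antisymm
    · rw [Ideal.span_le, Set.singleton_subset_iff]
      rw [hσg]
      exact Ideal.mem_span_singleton'.mpr ⟨_, rfl⟩
    · rw [Ideal.span_le, Set.singleton_subset_iff]
      refine Ideal.mem_span_singleton'.mpr
        ⟨algebraMap F _ (-(f.coeff 0)) * r ^ g.natDegree, ?_⟩
      rw [hσg]
      have : (algebraMap F (AdjoinRoot q) (-(f.coeff 0)) * r ^ g.natDegree) *
          ((algebraMap F _ (-(f.coeff 0)⁻¹) * ρ ^ g.natDegree) * AdjoinRoot.mk q g)
          = ((algebraMap F (AdjoinRoot q) (-(f.coeff 0)) * algebraMap F _ (-(f.coeff 0)⁻¹)) *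
            (r * ρ) ^ g.natDegree) * AdjoinRoot.mk q g := by
        rw [mul_pow]; ring
      rw [this, ← map_mul, hrρ, one_pow, mul_one]
      have : -f.coeff 0 * -(f.coeff 0)⁻¹ = 1 := by
        field_simp
      rw [this, map_one, one_mul]
  have hgen' : Ideal.span ({e} : Set (AdjoinRoot q)) = Ideal.span {AdjoinRoot.mk q g} := hgen
  -- σ e = e
  have hσe : σ e = e := by
    have hmap : Ideal.span ({σ e} : Set (AdjoinRoot q)) =
        Ideal.map σ.toRingHom (Ideal.span ({e} : Set (AdjoinRoot q))) := by
      rw [Ideal.map_span, Set.image_singleton]; rfl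
    have hmap2 : Ideal.span ({σ (AdjoinRoot.mk q g)} : Set (AdjoinRoot q)) =
        Ideal.map σ.toRingHom (Ideal.span ({AdjoinRoot.mk q g} : Set (AdjoinRoot q))) := by
      rw [Ideal.map_span, Set.image_singleton]; rfl
    have hspan : Ideal.span ({σ e} : Set (AdjoinRoot q)) = Ideal.span {e} :=
      calc Ideal.span ({σ e} : Set (AdjoinRoot q))
          = Ideal.map σ.toRingHom (Ideal.span ({e} : Set (AdjoinRoot q))) := hmap
        _ = Ideal.map σ.toRingHom (Ideal.span {AdjoinRoot.mk q g}) := by rw [hgen']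
        _ = Ideal.span ({σ (AdjoinRoot.mk q g)} : Set (AdjoinRoot q)) := hmap2.symm
        _ = Ideal.span {AdjoinRoot.mk q g} := hspanσg
        _ = Ideal.span ({e} : Set (AdjoinRoot q)) := hgen'.symm
    exact idem_span_unique ((map_mul σ e e).symm.trans (congrArg σ hidem)) hidem hspan
  -- key commuting property with xa j
  have hπr : π r = MonoidAlgebra.of F (QuaternionGroup n) (QuaternionGroup.a 1) := hπ
  have hkey : ∀ (j : ZMod (2 * n)) (z : AdjoinRoot q),
      MonoidAlgebra.of F (QuaternionGroup n) (QuaternionGroup.xa j) * π z =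
      π (σ z) * MonoidAlgebra.of F (QuaternionGroup n) (QuaternionGroup.xa j) := by
    intro j z
    have hmem : z ∈ Algebra.adjoin F ({r} : Set (AdjoinRoot q)) := by
      rw [AdjoinRoot.adjoinRoot_eq_top]; trivial
    induction hmem using Algebra.adjoin_induction with
    | mem x hx =>
      rw [Set.mem_singleton_iff] at hx
      subst hx
      rw [hπr, hσr, hρdef, map_pow, hπr, ← map_pow, ← map_mul, ← map_mul]
      congr 1
      rw [QuaternionGroup.a_one_pow, QuaternionGroup.xa_mul_a, QuaternionGroup.a_mul_xa]
      congr 1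
      have : ((2 * n - 1 : ℕ) : ZMod (2 * n)) = -1 := by
        rw [Nat.cast_sub (by omega : 1 ≤ 2 * n), ZMod.natCast_self, Nat.cast_one, zero_sub]
      rw [this, sub_neg_eq_add]
    | algebraMap c =>
      have h1 : π (σ ((algebraMap F (AdjoinRoot q)) c)) =
          algebraMap F (MonoidAlgebra F (QuaternionGroup n)) c := by
        have hc : σ ((algebraMap F (AdjoinRoot q)) c) = algebraMap F (AdjoinRoot q) c :=
          σ.commutes c
        rw [hc]; exact π.commutes c
      have h2 : π ((algebraMap F (AdjoinRoot q)) c) =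
          algebraMap F (MonoidAlgebra F (QuaternionGroup n)) c := π.commutes c
      rw [h1, h2]
      exact (Algebra.commutes (A := MonoidAlgebra F (QuaternionGroup n)) c _).symm
    | add x y hx hy ihx ihy =>
      simp only [map_add, mul_add, add_mul, ihx, ihy]
    | mul x y hx hy ihx ihy =>
      calc MonoidAlgebra.of F (QuaternionGroup n) (QuaternionGroup.xa j) * π (x * y)
          = (MonoidAlgebra.of F (QuaternionGroup n) (QuaternionGroup.xa j) * π x) * π y := by
            rw [map_mul, mul_assoc]
        _ = π (σ x) * (MonoidAlgebra.of F (QuaternionGroup n) (QuaternionGroup.xa j) * π y) := by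
            rw [ihx, mul_assoc]
        _ = π (σ x) * (π (σ y) * MonoidAlgebra.of F (QuaternionGroup n) (QuaternionGroup.xa j)) := by
            rw [ihy]
        _ = π (σ (x * y)) * MonoidAlgebra.of F (QuaternionGroup n) (QuaternionGroup.xa j) := by
            rw [map_mul, map_mul, ← mul_assoc]
  -- idempotency
  have hπe2 : π e * π e = π e := by rw [← map_mul, hidem]
  -- centrality
  have hcen : ∀ z, π e * z = z * π e := by
    intro z
    induction z using MonoidAlgebra.induction_on with
    | of w =>
      rcases w with i | j
      · have hval : π (r ^ i.val) = MonoidAlgebra.of F (QuaternionGroup n)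
            (QuaternionGroup.a i) := by
          rw [map_pow, hπr, ← map_pow, QuaternionGroup.a_one_pow,
            ZMod.natCast_rightInverse i]
        rw [← hval, ← map_mul, ← map_mul]
        exact congrArg π (mul_comm e _)
      · rw [hkey j e, hσe]
    | add x y ihx ihy => rw [mul_add, add_mul, ihx, ihy]
    | smul c x ih => rw [mul_smul_comm, smul_mul_assoc, ih]
  refine ⟨hπe2, hcen, ?_⟩
  -- dimension count
  haveI : Module.Finite F (MonoidAlgebra F (QuaternionGroup n)) :=
    Module.Finite.equiv (MonoidAlgebra.coeffLinearEquiv F).symm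
  haveI : Module.Finite F (AdjoinRoot q) :=
    Module.Finite.of_basis (AdjoinRoot.powerBasis hq0).basis
  have hrkRq : Module.finrank F (AdjoinRoot q) = 2 * n := by
    have h1 : Module.finrank F (AdjoinRoot q) = (AdjoinRoot.powerBasis hq0).dim :=
      (AdjoinRoot.powerBasis hq0).finrank
    have h2 : (AdjoinRoot.powerBasis hq0).dim = q.natDegree := rfl
    rw [h1, h2, hqdeg]
  -- dimension of the ideal spanned by e
  set I : Ideal F[X] := Ideal.span {q} with hIdef
  set Jg : Ideal F[X] := Ideal.span {g} with hJgdef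
  set Je : Ideal (AdjoinRoot q) := Ideal.span {e} with hJedef
  have hJe2 : Je = Ideal.map (Ideal.Quotient.mkₐ F I) Jg := by
    rw [hJgdef, Ideal.map_span, Set.image_singleton]
    exact hgen'
  have hIleJg : I ≤ Jg := by
    rw [hIdef, hJgdef]
    exact Ideal.span_singleton_le_span_singleton.mpr (Dvd.intro_left f hfg)
  have hsupJ : I ⊔ Jg = Jg := sup_eq_right.mpr hIleJg
  have hdimQuot : Module.finrank F (AdjoinRoot q ⧸ (Je.restrictScalars F)) = g.natDegree := by
    have E1 : (AdjoinRoot q ⧸ (Je.restrictScalars F)) ≃ₗ[F] (AdjoinRoot q ⧸ Je) :=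
      Submodule.Quotient.restrictScalarsEquiv F Je
    have E2 : (AdjoinRoot q ⧸ Je) ≃ₐ[F] ((F[X] ⧸ I) ⧸ Ideal.map (Ideal.Quotient.mkₐ F I) Jg) :=
      @Ideal.quotientEquivAlgOfEq F (F[X] ⧸ I) _ (inferInstance : Ring (F[X] ⧸ I)) _ Je _
        (inferInstance : Je.IsTwoSided) inferInstance hJe2
    have E3 : ((F[X] ⧸ I) ⧸ Ideal.map (Ideal.Quotient.mkₐ F I) Jg) ≃ₐ[F] F[X] ⧸ (I ⊔ Jg) :=
      DoubleQuot.quotQuotEquivQuotSupₐ F I Jg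
    have E4 : (F[X] ⧸ (I ⊔ Jg)) ≃ₐ[F] F[X] ⧸ Jg := Ideal.quotientEquivAlgOfEq F hsupJ
    have E : (AdjoinRoot q ⧸ (Je.restrictScalars F)) ≃ₗ[F] AdjoinRoot g :=
      E1.trans (E2.toLinearEquiv.trans (E3.toLinearEquiv.trans E4.toLinearEquiv))
    rw [E.finrank_eq]
    have h1 : Module.finrank F (AdjoinRoot g) = (AdjoinRoot.powerBasis hg0).dim :=
      (AdjoinRoot.powerBasis hg0).finrank
    rw [h1]; rfl
  have hdimJe : Module.finrank F (Je.restrictScalars F) = f.natDegree := by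
    have h1 := Submodule.finrank_quotient_add_finrank (Je.restrictScalars F)
    rw [hdimQuot, hrkRq] at h1
    omega
  -- the multiplication operator
  set u : MonoidAlgebra F (QuaternionGroup n) :=
    MonoidAlgebra.of F (QuaternionGroup n) (QuaternionGroup.xa 0) with hudef
  have hu : IsUnit u := (Group.isUnit (QuaternionGroup.xa 0)).map
    (MonoidAlgebra.of F (QuaternionGroup n))
  set T : MonoidAlgebra F (QuaternionGroup n) →ₗ[F] MonoidAlgebra F (QuaternionGroup n) :=
    LinearMap.mulRight F (π e) with hTdef
  set Φ : AdjoinRoot q →ₗ[F] MonoidAlgebra F (QuaternionGroup n) := π.toLinearMap with hΦdef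
  set Ψ : AdjoinRoot q →ₗ[F] MonoidAlgebra F (QuaternionGroup n) :=
    (LinearMap.mulLeft F u) ∘ₗ π.toLinearMap with hΨdef
  have hΦap : ∀ z, Φ z = π z := fun z => rfl
  have hΨap : ∀ z, Ψ z = u * π z := fun z => rfl
  have hTap : ∀ z, T z = z * π e := fun z => rfl
  have hrange : (Ideal.span {π e}).restrictScalars F = LinearMap.range T := by
    ext z
    simp only [Submodule.restrictScalars_mem, LinearMap.mem_range]
    constructor
    · intro h
      obtain ⟨c, hc⟩ := Ideal.mem_span_singleton'.mp h
      exact ⟨c, hc⟩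
    · rintro ⟨c, rfl⟩
      exact Ideal.mem_span_singleton'.mpr ⟨c, rfl⟩
  -- injectivity of Φ and Ψ
  have hπinj : Function.Injective π := by
    classical
    let w : QuaternionGroup n → AdjoinRoot q := fun x =>
      match x with
      | QuaternionGroup.a i => r ^ i.val
      | QuaternionGroup.xa _ => 0
    let ρℓ : MonoidAlgebra F (QuaternionGroup n) →ₗ[F] AdjoinRoot q :=
      Finsupp.linearCombination F w ∘ₗ (MonoidAlgebra.coeffLinearEquiv F).toLinearMap
    have hcomp : ∀ z : AdjoinRoot q, ρℓ (π z) = z := by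
      have hext : ρℓ.comp π.toLinearMap = LinearMap.id := by
        apply (AdjoinRoot.powerBasis hq0).basis.ext
        intro i
        rw [LinearMap.comp_apply, LinearMap.id_apply]
        have hbas : (AdjoinRoot.powerBasis hq0).basis i = r ^ (i : ℕ) := by
          rw [PowerBasis.coe_basis]
          rfl
        have hilt : (i : ℕ) < 2 * n := by
          have h1 := i.isLt
          have h2 : (AdjoinRoot.powerBasis hq0).dim = 2 * n := by
            have h3 : (AdjoinRoot.powerBasis hq0).dim = q.natDegree := rfl
            rw [h3, hqdeg]
          omega
        rw [hbas]
        show ρℓ (π (r ^ (i : ℕ))) = r ^ (i : ℕ)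
        rw [map_pow, hπr, ← map_pow, QuaternionGroup.a_one_pow]
        show ρℓ (MonoidAlgebra.single (QuaternionGroup.a ((i : ℕ) : ZMod (2 * n))) 1) = _
        have : ρℓ (MonoidAlgebra.single (QuaternionGroup.a ((i : ℕ) : ZMod (2 * n))) 1)
            = (1 : F) • w (QuaternionGroup.a ((i : ℕ) : ZMod (2 * n))) :=
          Finsupp.linearCombination_single F _ _
        rw [this, one_smul]
        show r ^ (((i : ℕ) : ZMod (2 * n)).val) = r ^ (i : ℕ)
        rw [ZMod.val_cast_of_lt hilt]
      intro z
      have := DFunLike.congr_fun hext z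
      simpa using this
    intro z₁ z₂ h
    rw [← hcomp z₁, ← hcomp z₂, h]
  have hΨinj : Function.Injective Ψ := by
    intro z₁ z₂ h
    rw [hΨap, hΨap] at h
    exact hπinj (hu.mul_left_cancel h)
  -- support lemmas
  have hsuppπ : ∀ z : AdjoinRoot q, ∀ x ∈ (π z).coeff.support, ∃ i, x = QuaternionGroup.a i := by
    intro z
    have hmem : z ∈ Algebra.adjoin F ({r} : Set (AdjoinRoot q)) := by
      rw [AdjoinRoot.adjoinRoot_eq_top]; trivial
    induction hmem using Algebra.adjoin_induction with
    | mem x hx =>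
      rw [Set.mem_singleton_iff] at hx
      subst hx
      intro x hx
      rw [hπr] at hx
      have := Finsupp.support_single_subset hx
      rw [Finset.mem_singleton] at this
      exact ⟨1, this⟩
    | algebraMap c =>
      intro x hx
      have h2 : π ((algebraMap F (AdjoinRoot q)) c) =
          algebraMap F (MonoidAlgebra F (QuaternionGroup n)) c := π.commutes c
      rw [h2] at hx
      have h3 : algebraMap F (MonoidAlgebra F (QuaternionGroup n)) c
          = MonoidAlgebra.single 1 c := rfl
      rw [h3] at hx
      have := Finsupp.support_single_subset hx
      rw [Finset.mem_singleton] at this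
      exact ⟨0, by rw [this, QuaternionGroup.one_def]⟩
    | add x y hx hy ihx ihy =>
      intro t ht
      rw [map_add] at ht
      have := Finsupp.support_add ht
      rw [Finset.mem_union] at this
      rcases this with h | h
      · exact ihx t h
      · exact ihy t h
    | mul x y hx hy ihx ihy =>
      intro t ht
      rw [map_mul] at ht
      have := MonoidAlgebra.support_coeff_mul_subset (π x) (π y) ht
      obtain ⟨p1, hp1, p2, hp2, rfl⟩ := Finset.mem_mul.mp this
      obtain ⟨i1, rfl⟩ := ihx p1 hp1
      obtain ⟨i2, rfl⟩ := ihy p2 hp2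
      exact ⟨i1 + i2, by rw [QuaternionGroup.a_mul_a]⟩
  have hsuppΨ : ∀ z : AdjoinRoot q, ∀ x ∈ (u * π z).coeff.support,
      ∃ i, x = QuaternionGroup.xa i := by
    intro z x hx
    have := MonoidAlgebra.support_coeff_mul_subset u (π z) hx
    obtain ⟨p1, hp1, p2, hp2, rfl⟩ := Finset.mem_mul.mp this
    have hp1' : p1 = QuaternionGroup.xa 0 := by
      have := Finsupp.support_single_subset hp1
      rwa [Finset.mem_singleton] at this
    obtain ⟨i, rfl⟩ := hsuppπ z p2 hp2
    exact ⟨0 + i, by rw [hp1', QuaternionGroup.xa_mul_a]⟩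
  -- intertwining
  have hTΦ : T ∘ₗ Φ = Φ ∘ₗ LinearMap.mulRight F e := by
    apply LinearMap.ext
    intro z
    show T (Φ z) = Φ (z * e)
    rw [hTap, hΦap, hΦap, ← map_mul]
  have hTΨ : T ∘ₗ Ψ = Ψ ∘ₗ LinearMap.mulRight F e := by
    apply LinearMap.ext
    intro z
    show T (Ψ z) = Ψ (z * e)
    rw [hTap, hΨap, hΨap, mul_assoc, ← map_mul]
  have hrangeMR : LinearMap.range (LinearMap.mulRight F e) = Je.restrictScalars F := by
    ext zz
    simp only [LinearMap.mem_range, Submodule.restrictScalars_mem]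
    constructor
    · rintro ⟨c, rfl⟩
      exact Ideal.mem_span_singleton'.mpr ⟨c, rfl⟩
    · intro h
      obtain ⟨c, hc⟩ := Ideal.mem_span_singleton'.mp h
      exact ⟨c, hc⟩
  have hrangeTΦ : Submodule.map T (LinearMap.range Φ) =
      Submodule.map Φ (Je.restrictScalars F) := by
    rw [← LinearMap.range_comp, hTΦ, LinearMap.range_comp, hrangeMR]
  have hrangeTΨ : Submodule.map T (LinearMap.range Ψ) =
      Submodule.map Ψ (Je.restrictScalars F) := by
    rw [← LinearMap.range_comp, hTΨ, LinearMap.range_comp, hrangeMR]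
  have hd1 : Module.finrank F (Submodule.map Φ (Je.restrictScalars F)) = f.natDegree := by
    rw [← hdimJe]
    exact (LinearEquiv.finrank_eq (Submodule.equivMapOfInjective Φ hπinj _)).symm
  have hd2 : Module.finrank F (Submodule.map Ψ (Je.restrictScalars F)) = f.natDegree := by
    rw [← hdimJe]
    exact (LinearEquiv.finrank_eq (Submodule.equivMapOfInjective Ψ hΨinj _)).symm
  have hπa : ∀ i : ZMod (2 * n), π (r ^ i.val) =
      MonoidAlgebra.of F (QuaternionGroup n) (QuaternionGroup.a i) := by
    intro i
    rw [map_pow, hπr, ← map_pow, QuaternionGroup.a_one_pow, ZMod.natCast_rightInverse i]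
  have htop : LinearMap.range Φ ⊔ LinearMap.range Ψ = ⊤ := by
    rw [eq_top_iff]
    rintro z -
    induction z using MonoidAlgebra.induction_on with
    | of x =>
      rcases x with i | i
      · apply Submodule.mem_sup_left
        exact ⟨r ^ i.val, by rw [hΦap, hπa]⟩
      · apply Submodule.mem_sup_right
        refine ⟨r ^ i.val, ?_⟩
        rw [hΨap, hπa, hudef, ← map_mul, QuaternionGroup.xa_mul_a, zero_add]
    | add x y ihx ihy => exact Submodule.add_mem _ ihx ihy
    | smul c x ih => exact Submodule.smul_mem _ c ih
  have hdisj : Disjoint (Submodule.map T (LinearMap.range Φ))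
      (Submodule.map T (LinearMap.range Ψ)) := by
    have hs1 : Submodule.map T (LinearMap.range Φ) ≤ LinearMap.range Φ := by
      rintro x ⟨y, ⟨z1, rfl⟩, rfl⟩
      exact ⟨z1 * e, by rw [hΦap, hΦap, map_mul]; rfl⟩
    have hs2 : Submodule.map T (LinearMap.range Ψ) ≤ LinearMap.range Ψ := by
      rintro x ⟨y, ⟨z1, rfl⟩, rfl⟩
      refine ⟨z1 * e, ?_⟩
      rw [hΨap, hΨap, map_mul]
      show u * (π z1 * π e) = (u * π z1) * π e
      rw [mul_assoc]
    have hbase : Disjoint (LinearMap.range Φ) (LinearMap.range Ψ) := by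
      rw [Submodule.disjoint_def]
      rintro x ⟨z1, rfl⟩ ⟨z2, hz2⟩
      rw [hΨap] at hz2
      rw [hΦap]
      have hsupp : (π z1).coeff.support = ∅ := by
        apply Finset.eq_empty_of_forall_notMem
        intro t ht
        obtain ⟨i1, rfl⟩ := hsuppπ z1 t ht
        have ht2 : QuaternionGroup.a i1 ∈ (u * π z2).coeff.support := by rw [hz2]; exact ht
        obtain ⟨i2, hi2⟩ := hsuppΨ z2 _ ht2
        simp at hi2
      exact MonoidAlgebra.coeff_eq_zero.mp (Finsupp.support_eq_empty.mp hsupp)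
    exact Disjoint.mono hs1 hs2 hbase
  -- final count
  have hfin : Module.finrank F ((Ideal.span {π e}).restrictScalars F) =
      Module.finrank F (Submodule.map T (LinearMap.range Φ)) +
      Module.finrank F (Submodule.map T (LinearMap.range Ψ)) := by
    rw [hrange, LinearMap.range_eq_map, ← htop, Submodule.map_sup]
    have h := Submodule.finrank_sup_add_finrank_inf_eq
      (Submodule.map T (LinearMap.range Φ)) (Submodule.map T (LinearMap.range Ψ))
    rw [hdisj.eq_bot, finrank_bot] at h
    omega
  rw [hfin, hrangeTΦ, hrangeTΨ, hd1, hd2]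
  omega
end
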